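/- arXiv:1703.00683 — 9 statements merged into one kernel-verified Lean document; each statement's English description precedes it below -/
import Mathlib

section
/- For every history π̄ = v̄₀ a₁ v̄₁ … aₙ v̄ₙ in the powerset game Ḡ and every uₙ ∈ v̄ₙ, there exists a history π = u₀ a₁' u₁ … aₙ' uₙ in the original game G such that uᵢ ∈ v̄ᵢ for all i and aᵢ' ∼ᴬ aᵢ for all i. -/
/-- `Post B S`: positions reachable in one step from `S` using an action in `B`. -/
def Post {V A : Type*} (Ea : A → V → V → Prop) (B : Set A) (S : Set V) : Set V :=
  {v | ∃ s ∈ S, ∃ b ∈ B, Ea b s v}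

/-- The `a`-labelled edge relation of the powerset game: there is an `a`-edge from
`s` to `t` iff `t = Post_{[a]}(s) ∩ [u]` for some `u ∈ Post_{[a]}(s)`. -/
def powEdgeA {V A : Type*} (Ea : A → V → V → Prop) (simV : V → V → Prop)
    (simA : A → A → Prop) (a : A) (s t : Set V) : Prop :=
  ∃ u ∈ Post Ea {b | simA b a} s, t = Post Ea {b | simA b a} s ∩ {w | simV u w}

/-- **Lemma (powerset histories lift).**
For every history `v̄₀ a₁ v̄₁ … aₙ v̄ₙ` of the powerset game and every `uₙ ∈ v̄ₙ`,
there is a history `u₀ a₁' u₁ … aₙ' uₙ` of the original game `G` with `uᵢ ∈ v̄ᵢ`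
for all `i` and `aᵢ' ∼ᴬ aᵢ` for all `i`. -/
theorem powerset_history_lift {V A : Type*}
    (Ea : A → V → V → Prop) (simV : V → V → Prop) (simA : A → A → Prop)
    (hV : Equivalence simV) (hA : Equivalence simA)
    (n : ℕ) (vbar : Fin (n + 1) → Set V) (a : Fin n → A)
    (hhist : ∀ i : Fin n, powEdgeA Ea simV simA (a i) (vbar i.castSucc) (vbar i.succ))
    (un : V) (hun : un ∈ vbar (Fin.last n)) :
    ∃ (u : Fin (n + 1) → V) (a' : Fin n → A),
      u (Fin.last n) = un ∧
      (∀ i : Fin (n + 1), u i ∈ vbar i) ∧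
      (∀ i : Fin n, simA (a' i) (a i)) ∧
      (∀ i : Fin n, Ea (a' i) (u i.castSucc) (u i.succ)) := by
  induction n generalizing un with
  | zero =>
    refine ⟨fun _ => un, Fin.elim0, rfl, fun i => ?_, fun i => i.elim0, fun i => i.elim0⟩
    have : i = Fin.last 0 := by ext; omega
    rw [this]; exact hun
  | succ n ih =>
    obtain ⟨w, hw, heq⟩ := hhist (Fin.last n)
    have hunPost : un ∈ Post Ea {b | simA b (a (Fin.last n))} (vbar (Fin.last n).castSucc) := by
      have h := hun
      have hsucc : (Fin.last n).succ = Fin.last (n + 1) := rfl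
      rw [← hsucc, heq] at h
      exact h.1
    obtain ⟨s, hs, b, hb, hEa⟩ := hunPost
    obtain ⟨u', a', hlast, hmem, hsim, hE⟩ :=
      ih (fun i => vbar i.castSucc) (fun i => a i.castSucc)
        (fun i => by
          have h := hhist i.castSucc
          rwa [Fin.succ_castSucc] at h) s hs
    refine ⟨Fin.snoc u' un, Fin.snoc a' b, Fin.snoc_last _ _, ?_, ?_, ?_⟩
    · intro i
      refine Fin.lastCases ?_ (fun j => ?_) i
      · rw [Fin.snoc_last]; exact hun
      · rw [Fin.snoc_castSucc]; exact hmem j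
    · intro i
      refine Fin.lastCases ?_ (fun j => ?_) i
      · rw [Fin.snoc_last]; exact hb
      · rw [Fin.snoc_castSucc]; exact hsim j
    · intro i
      refine Fin.lastCases ?_ (fun j => ?_) i
      · have h1 : (Fin.snoc u' un : Fin (n+2) → V) (Fin.last n).castSucc = s := by
          rw [Fin.snoc_castSucc]; exact hlast
        have h2 : (Fin.snoc u' un : Fin (n+2) → V) (Fin.last n).succ = un := by
          have : (Fin.last n).succ = Fin.last (n+1) := rfl
          rw [this, Fin.snoc_last]
        rw [Fin.snoc_last, h1, h2]; exact hEa
      · rw [Fin.snoc_castSucc]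
        have h1 : (j.castSucc : Fin (n+1)).castSucc = (j.castSucc).castSucc := rfl
        have h2 : (j.castSucc : Fin (n+1)).succ = (j.succ).castSucc := Fin.succ_castSucc j
        rw [h2, Fin.snoc_castSucc, Fin.snoc_castSucc]
        exact hE j
end

section
/- For every m > 1, the m×m undirected grid graph G_m (vertices {(i,j) | 1 ≤ i,j ≤ m} with edges between vertices at L1-distance 1) has tree-width at least m; equivalently, in the cops-and-robber game on the grid, m cops do not have a monotone winning strategy against a visible robber. -/
/-- Vertices reachable from `v` in `G − X`: along edges whose targets avoid `X`. -/
def reachAvoid {V : Type*} (E : V → V → Prop) (X : Set V) (v : V) : Set V :=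
  {w | Relation.ReflTransGen (fun a b => E a b ∧ b ∉ X) v w}

/-- Monotone win of `k` cops against one visible robber from position `(U, v)`
in the cops-and-robber game on the graph with edge relation `E`. -/
inductive MonCopsWin {V : Type*} (E : V → V → Prop) (k : ℕ) : Set V → V → Prop
  | step (U : Set V) (v : V) (U' : Set V) (hfin : U'.Finite) (hcard : U'.ncard ≤ k)
      (hmon : ∀ u ∈ U \ U', u ∉ reachAvoid E (U ∩ U') v)
      (h : ∀ v' ∈ reachAvoid E (U ∩ U') v, v' ∉ U' → MonCopsWin E k U' v') :
      MonCopsWin E k U v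

/-- The edge relation of the `m × m` undirected grid: vertices `(i, j)` with
`1 ≤ i, j ≤ m` (here modelled as `Fin m × Fin m`), edges between vertices at
L1-distance `1`. -/
def gridE (m : ℕ) (p q : Fin m × Fin m) : Prop :=
  (p.1 = q.1 ∧ ((p.2 : ℕ) + 1 = (q.2 : ℕ) ∨ (q.2 : ℕ) + 1 = (p.2 : ℕ))) ∨
  (p.2 = q.2 ∧ ((p.1 : ℕ) + 1 = (q.1 : ℕ) ∨ (q.1 : ℕ) + 1 = (p.1 : ℕ)))

namespace GridAux

variable {m : ℕ}

abbrev V (m : ℕ) := Fin m × Fin m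

def rowArm (m : ℕ) (i : Fin m) : Set (V m) := {p | p.1 = i ∧ (p.2 : ℕ) < m - 1}
def colArm (m : ℕ) (j : Fin m) : Set (V m) := {p | p.2 = j ∧ (p.1 : ℕ) < m - 1}
def rowR (m : ℕ) : Set (V m) := {p | (p.1 : ℕ) = m - 1}
def colD (m : ℕ) : Set (V m) := {p | (p.2 : ℕ) = m - 1 ∧ (p.1 : ℕ) < m - 1}

inductive Br (m : ℕ) : Set (V m) → Prop
  | cross (i j : Fin m) (hi : (i : ℕ) < m - 1) (hj : (j : ℕ) < m - 1) :
      Br m (rowArm m i ∪ colArm m j)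
  | R : Br m (rowR m)
  | D : Br m (colD m)

def inS (S : Set (V m)) (p q : V m) : Prop := gridE m p q ∧ q ∈ S

lemma gridE_symm {p q : V m} (h : gridE m p q) : gridE m q p := by
  rcases h with ⟨h1, h2⟩ | ⟨h1, h2⟩
  · exact Or.inl ⟨h1.symm, h2.symm⟩
  · exact Or.inr ⟨h1.symm, h2.symm⟩

lemma rtg_reverse {S : Set (V m)} {x y : V m} (h : Relation.ReflTransGen (inS S) x y)
    (hx : x ∈ S) : y ∈ S ∧ Relation.ReflTransGen (inS S) y x := by
  induction h with
  | refl => exact ⟨hx, Relation.ReflTransGen.refl⟩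
  | tail _ hstep ih =>
      exact ⟨hstep.2, Relation.ReflTransGen.head ⟨gridE_symm hstep.1, ih.1⟩ ih.2⟩

lemma pathH_aux {S : Set (V m)} (i : Fin m) :
    ∀ d (a b : Fin m), (a : ℕ) + d = b →
      (∀ c : Fin m, (a:ℕ) ≤ c → (c:ℕ) ≤ b → (i, c) ∈ S) →
      Relation.ReflTransGen (inS S) (i, a) (i, b) := by
  intro d
  induction d with
  | zero =>
      intro a b hab _
      have : a = b := Fin.ext (by omega)
      subst this; exact Relation.ReflTransGen.refl
  | succ d ih =>
      intro a b hab hmem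
      have ha1 : (a : ℕ) + 1 < m := by have := b.isLt; omega
      set a' : Fin m := ⟨(a : ℕ) + 1, ha1⟩ with ha'
      have hstep : inS S (i, a) (i, a') := by
        refine ⟨Or.inl ⟨rfl, Or.inl rfl⟩, hmem a' (by simp [ha']) (by simp [ha']; omega)⟩
      refine Relation.ReflTransGen.head hstep (ih a' b (by simp [ha']; omega) ?_)
      intro c hc1 hc2
      exact hmem c (by simp [ha'] at hc1; omega) hc2

lemma pathV_aux {S : Set (V m)} (j : Fin m) :
    ∀ d (a b : Fin m), (a : ℕ) + d = b →
      (∀ c : Fin m, (a:ℕ) ≤ c → (c:ℕ) ≤ b → (c, j) ∈ S) →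
      Relation.ReflTransGen (inS S) (a, j) (b, j) := by
  intro d
  induction d with
  | zero =>
      intro a b hab _
      have : a = b := Fin.ext (by omega)
      subst this; exact Relation.ReflTransGen.refl
  | succ d ih =>
      intro a b hab hmem
      have ha1 : (a : ℕ) + 1 < m := by have := b.isLt; omega
      set a' : Fin m := ⟨(a : ℕ) + 1, ha1⟩ with ha'
      have hstep : inS S (a, j) (a', j) := by
        refine ⟨Or.inr ⟨rfl, Or.inl rfl⟩, hmem a' (by simp [ha']) (by simp [ha']; omega)⟩
      refine Relation.ReflTransGen.head hstep (ih a' b (by simp [ha']; omega) ?_)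
      intro c hc1 hc2
      exact hmem c (by simp [ha'] at hc1; omega) hc2

lemma pathH {S : Set (V m)} (i : Fin m) (a b : Fin m)
    (hmem : ∀ c : Fin m, min (a:ℕ) b ≤ c → (c:ℕ) ≤ max (a:ℕ) b → (i, c) ∈ S) :
    Relation.ReflTransGen (inS S) (i, a) (i, b) := by
  rcases le_total (a:ℕ) (b:ℕ) with h | h
  · exact pathH_aux i ((b:ℕ) - a) a b (by omega)
      (fun c h1 h2 => hmem c (by omega) (by omega))
  · have hb : (i, b) ∈ S := hmem b (by omega) (by omega)
    have := pathH_aux (S := S) i ((a:ℕ) - b) b a (by omega)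
      (fun c h1 h2 => hmem c (by omega) (by omega))
    exact (rtg_reverse this hb).2

lemma pathV {S : Set (V m)} (j : Fin m) (a b : Fin m)
    (hmem : ∀ c : Fin m, min (a:ℕ) b ≤ c → (c:ℕ) ≤ max (a:ℕ) b → (c, j) ∈ S) :
    Relation.ReflTransGen (inS S) (a, j) (b, j) := by
  rcases le_total (a:ℕ) (b:ℕ) with h | h
  · exact pathV_aux j ((b:ℕ) - a) a b (by omega)
      (fun c h1 h2 => hmem c (by omega) (by omega))
  · have hb : (b, j) ∈ S := hmem b (by omega) (by omega)
    have := pathV_aux (S := S) j ((a:ℕ) - b) b a (by omega)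
      (fun c h1 h2 => hmem c (by omega) (by omega))
    exact (rtg_reverse this hb).2


/-- every vertex of a cross connects to its center within the cross -/
lemma toCenter {i j : Fin m} (hi : (i:ℕ) < m-1) (hj : (j:ℕ) < m-1)
    {v : V m} (hv : v ∈ rowArm m i ∪ colArm m j) :
    Relation.ReflTransGen (inS (rowArm m i ∪ colArm m j)) v (i, j) := by
  rcases hv with ⟨h1, h2⟩ | ⟨h1, h2⟩
  · -- v = (i, v.2) on the row arm
    have hv : v = (i, v.2) := by rw [← h1]
    rw [hv]
    exact pathH i v.2 j (fun c hc1 hc2 => Or.inl ⟨rfl, show (c:ℕ) < m-1 by omega⟩)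
  · have hv : v = (v.1, j) := by rw [← h1]
    rw [hv]
    exact pathV j v.1 i (fun c hc1 hc2 => Or.inr ⟨rfl, show (c:ℕ) < m-1 by omega⟩)

lemma connIn (hm : 1 < m) {B : Set (V m)} {v w : V m} (hB : Br m B)
    (hv : v ∈ B) (hw : w ∈ B) : Relation.ReflTransGen (inS B) v w := by
  rcases hB with ⟨i, j, hi, hj⟩ | _ | _
  · exact (toCenter hi hj hv).trans (rtg_reverse (toCenter hi hj hw) hw).2
  · -- rowR
    have hv1 : v = (v.1, v.2) := rfl
    have hw1 : w.1 = v.1 := Fin.ext (by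
      have h1 : (v.1 : ℕ) = m - 1 := hv
      have h2 : (w.1 : ℕ) = m - 1 := hw
      omega)
    rw [hv1, ← hw1]
    exact pathH w.1 v.2 w.2 (fun c _ _ => by
      show (w.1 : ℕ) = m - 1; exact hw)
  · -- colD
    have hw1 : w.2 = v.2 := Fin.ext (by
      have h1 : (v.2 : ℕ) = m - 1 := hv.1
      have h2 : (w.2 : ℕ) = m - 1 := hw.1
      omega)
    have hv1 : v = (v.1, v.2) := rfl
    rw [hv1, ← hw1]
    exact pathV w.2 v.1 w.1 (fun c hc1 hc2 => by
      refine ⟨hw.1, show (c:ℕ) < m-1 from ?_⟩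
      have h1 : (v.1 : ℕ) < m - 1 := hv.2
      have h2 : (w.1 : ℕ) < m - 1 := hw.2
      omega)

lemma touch (hm : 1 < m) {B B' : Set (V m)} (hB : Br m B) (hB' : Br m B') :
    (∃ z, z ∈ B ∧ z ∈ B') ∨ (∃ a b, a ∈ B ∧ b ∈ B' ∧ gridE m a b) := by
  have hlast : m - 1 < m := by omega
  have hpen : m - 2 < m := by omega
  set last : Fin m := ⟨m - 1, hlast⟩ with hlastdef
  set pen : Fin m := ⟨m - 2, hpen⟩ with hpendef
  have hpenlt : (pen : ℕ) < m - 1 := by simp [hpendef]; omega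
  have hedgeV : ∀ j : Fin m, gridE m (pen, j) (last, j) := by
    intro j; exact Or.inr ⟨rfl, Or.inl (by simp [hpendef, hlastdef]; omega)⟩
  have hedgeH : ∀ i : Fin m, gridE m (i, pen) (i, last) := by
    intro i; exact Or.inl ⟨rfl, Or.inl (by simp [hpendef, hlastdef]; omega)⟩
  rcases hB with ⟨i, j, hi, hj⟩ | _ | _ <;> rcases hB' with ⟨i', j', hi', hj'⟩ | _ | _
  · -- cross cross : intersect at (i, j')
    exact Or.inl ⟨(i, j'), Or.inl ⟨rfl, hj'⟩, Or.inr ⟨rfl, hi⟩⟩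
  · -- cross R : (pen, j) - (last, j)
    exact Or.inr ⟨(pen, j), (last, j), Or.inr ⟨rfl, hpenlt⟩, by simp [rowR, hlastdef], hedgeV j⟩
  · -- cross D : (i, pen) - (i, last)
    exact Or.inr ⟨(i, pen), (i, last), Or.inl ⟨rfl, hpenlt⟩,
      ⟨by simp [hlastdef], hi⟩, hedgeH i⟩
  · -- R cross
    exact Or.inr ⟨(last, j'), (pen, j'), by simp [rowR, hlastdef],
      Or.inr ⟨rfl, hpenlt⟩, gridE_symm (hedgeV j')⟩
  · exact Or.inl ⟨(last, last), by simp [rowR, hlastdef], by simp [rowR, hlastdef]⟩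
  · -- R D : (last,last) ∈ R adjacent (pen,last) ∈ D
    exact Or.inr ⟨(last, last), (pen, last), by simp [rowR, hlastdef],
      ⟨by simp [hlastdef], hpenlt⟩, gridE_symm (hedgeV last)⟩
  · -- D cross
    exact Or.inr ⟨(i', last), (i', pen), ⟨by simp [hlastdef], hi'⟩,
      Or.inl ⟨rfl, hpenlt⟩, gridE_symm (hedgeH i')⟩
  · -- D R
    exact Or.inr ⟨(pen, last), (last, last), ⟨by simp [hlastdef], hpenlt⟩,
      by simp [rowR, hlastdef], hedgeV last⟩
  · -- D D
    exact Or.inl ⟨(pen, last), ⟨by simp [hlastdef], hpenlt⟩, ⟨by simp [hlastdef], hpenlt⟩⟩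

lemma connTo (hm : 1 < m) {B B' : Set (V m)} (hB : Br m B) (hB' : Br m B')
    {v : V m} (hv : v ∈ B) :
    ∃ w ∈ B', Relation.ReflTransGen (inS (B ∪ B')) v w := by
  have mono : ∀ {x y : V m}, inS B x y → inS (B ∪ B') x y :=
    fun h => ⟨h.1, Or.inl h.2⟩
  rcases touch hm hB hB' with ⟨z, hz, hz'⟩ | ⟨a, b, ha, hb, hab⟩
  · exact ⟨z, hz', Relation.ReflTransGen.mono (fun _ _ h => mono h) _ _ (connIn hm hB hv hz)⟩
  · refine ⟨b, hb, (Relation.ReflTransGen.mono (fun _ _ h => mono h) _ _ (connIn hm hB hv ha)).tail ⟨hab, Or.inr hb⟩⟩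


lemma card_blow (hm : 1 < m) {U : Set (V m)} (hfin : U.Finite) (hcard : U.ncard ≤ m)
    (f : Fin (m + 1) → V m) (hinj : Function.Injective f) (hmem : ∀ k, f k ∈ U) : False := by
  have hsub : ↑(Finset.image f Finset.univ) ⊆ U := by
    intro x hx
    simp only [Finset.coe_image, Finset.coe_univ, Set.image_univ, Set.mem_range] at hx
    obtain ⟨k, rfl⟩ := hx
    exact hmem k
  have hc : (Finset.image f Finset.univ).card = m + 1 := by
    rw [Finset.card_image_of_injective _ hinj, Finset.card_univ, Fintype.card_fin]
  have := Set.ncard_le_ncard hsub hfin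
  rw [Set.ncard_coe_finset, hc] at this
  omega

lemma freeElem (hm : 1 < m) {U : Set (V m)} (hfin : U.Finite) (hcard : U.ncard ≤ m) :
    ∃ B, Br m B ∧ ∀ x ∈ B, x ∉ U := by
  by_contra hcon
  push_neg at hcon
  have hR : ∃ x ∈ rowR m, x ∈ U := hcon _ Br.R
  have hD : ∃ x ∈ colD m, x ∈ U := hcon _ Br.D
  obtain ⟨r, hrR, hrU⟩ := hR
  obtain ⟨d, hdD, hdU⟩ := hD
  have hlast : m - 1 < m := by omega
  by_cases hrow : ∀ i : Fin m, (i : ℕ) < m - 1 → ∃ x, x ∈ rowArm m i ∧ x ∈ U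
  · -- all row arms hit: m-1 points in distinct rows < m-1, plus r, plus d
    choose g hg hgU using hrow
    set f : Fin (m + 1) → V m := fun k =>
      if h : (k : ℕ) < m - 1 then g ⟨k, by omega⟩ (by simpa using h)
      else if (k : ℕ) = m - 1 then r else d with hf
    refine card_blow hm hfin hcard f ?_ ?_
    · intro k k' hkk'
      by_cases h1 : (k : ℕ) < m - 1 <;> by_cases h2 : (k' : ℕ) < m - 1
      · -- both arms: first coordinates determine
        simp only [hf, dif_pos h1, dif_pos h2] at hkk'
        have e1 := (hg ⟨k, by omega⟩ (by simpa using h1)).1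
        have e2 := (hg ⟨k', by omega⟩ (by simpa using h2)).1
        rw [hkk'] at e1
        have : (⟨(k:ℕ), by omega⟩ : Fin m) = ⟨(k':ℕ), by omega⟩ := e1.symm.trans e2
        exact Fin.ext (by injection this)
      · exfalso
        simp only [hf, dif_pos h1, dif_neg h2] at hkk'
        have e1 := hg ⟨k, by omega⟩ (by simpa using h1)
        by_cases h3 : (k' : ℕ) = m - 1
        · rw [if_pos h3] at hkk'
          have : ((g ⟨k, by omega⟩ (by simpa using h1)).1 : ℕ) = m - 1 := by
            rw [hkk']; exact hrR
          rw [e1.1] at this; simp at this; omega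
        · rw [if_neg h3] at hkk'
          have : ((g ⟨k, by omega⟩ (by simpa using h1)).2 : ℕ) = m - 1 := by
            rw [hkk']; exact hdD.1
          have := e1.2; omega
      · exfalso
        simp only [hf, dif_neg h1, dif_pos h2] at hkk'
        have e1 := hg ⟨k', by omega⟩ (by simpa using h2)
        by_cases h3 : (k : ℕ) = m - 1
        · rw [if_pos h3] at hkk'
          have : ((g ⟨k', by omega⟩ (by simpa using h2)).1 : ℕ) = m - 1 := by
            rw [← hkk']; exact hrR
          rw [e1.1] at this; simp at this; omega
        · rw [if_neg h3] at hkk'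
          have : ((g ⟨k', by omega⟩ (by simpa using h2)).2 : ℕ) = m - 1 := by
            rw [← hkk']; exact hdD.1
          have := e1.2; omega
      · -- both in {r, d}-land
        have hk : (k : ℕ) = m - 1 ∨ (k : ℕ) = m := by have := k.isLt; omega
        have hk' : (k' : ℕ) = m - 1 ∨ (k' : ℕ) = m := by have := k'.isLt; omega
        have hrd : r ≠ d := by
          intro h
          have h1 : (r.1 : ℕ) = m - 1 := hrR
          have h2 : (d.1 : ℕ) < m - 1 := hdD.2
          rw [h] at h1; omega
        simp only [hf, dif_neg h1, dif_neg h2] at hkk'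
        rcases hk with hk | hk <;> rcases hk' with hk' | hk'
        · exact Fin.ext (by omega)
        · rw [if_pos hk, if_neg (by omega)] at hkk'; exact absurd hkk' hrd
        · rw [if_neg (by omega), if_pos hk'] at hkk'; exact absurd hkk'.symm hrd
        · exact Fin.ext (by omega)
    · intro k
      by_cases h1 : (k : ℕ) < m - 1
      · simp only [hf, dif_pos h1]; exact hgU _ _
      · simp only [hf, dif_neg h1]
        by_cases h3 : (k : ℕ) = m - 1
        · rw [if_pos h3]; exact hrU
        · rw [if_neg h3]; exact hdU
  · push_neg at hrow
    obtain ⟨i, hi, hifree⟩ := hrow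
    by_cases hcol : ∀ j : Fin m, (j : ℕ) < m - 1 → ∃ x, x ∈ colArm m j ∧ x ∈ U
    · choose g hg hgU using hcol
      set f : Fin (m + 1) → V m := fun k =>
        if h : (k : ℕ) < m - 1 then g ⟨k, by omega⟩ (by simpa using h)
        else if (k : ℕ) = m - 1 then r else d with hf
      refine card_blow hm hfin hcard f ?_ ?_
      · intro k k' hkk'
        by_cases h1 : (k : ℕ) < m - 1 <;> by_cases h2 : (k' : ℕ) < m - 1
        · simp only [hf, dif_pos h1, dif_pos h2] at hkk'
          have e1 := (hg ⟨k, by omega⟩ (by simpa using h1)).1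
          have e2 := (hg ⟨k', by omega⟩ (by simpa using h2)).1
          rw [hkk'] at e1
          have : (⟨(k:ℕ), by omega⟩ : Fin m) = ⟨(k':ℕ), by omega⟩ := e1.symm.trans e2
          exact Fin.ext (by injection this)
        · exfalso
          simp only [hf, dif_pos h1, dif_neg h2] at hkk'
          have e1 := hg ⟨k, by omega⟩ (by simpa using h1)
          by_cases h3 : (k' : ℕ) = m - 1
          · rw [if_pos h3] at hkk'
            have : ((g ⟨k, by omega⟩ (by simpa using h1)).1 : ℕ) = m - 1 := by
              rw [hkk']; exact hrR
            have := e1.2; omega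
          · rw [if_neg h3] at hkk'
            have : ((g ⟨k, by omega⟩ (by simpa using h1)).2 : ℕ) = m - 1 := by
              rw [hkk']; exact hdD.1
            rw [e1.1] at this; simp at this; omega
        · exfalso
          simp only [hf, dif_neg h1, dif_pos h2] at hkk'
          have e1 := hg ⟨k', by omega⟩ (by simpa using h2)
          by_cases h3 : (k : ℕ) = m - 1
          · rw [if_pos h3] at hkk'
            have : ((g ⟨k', by omega⟩ (by simpa using h2)).1 : ℕ) = m - 1 := by
              rw [← hkk']; exact hrR
            have := e1.2; omega
          · rw [if_neg h3] at hkk'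
            have : ((g ⟨k', by omega⟩ (by simpa using h2)).2 : ℕ) = m - 1 := by
              rw [← hkk']; exact hdD.1
            rw [e1.1] at this; simp at this; omega
        · have hk : (k : ℕ) = m - 1 ∨ (k : ℕ) = m := by have := k.isLt; omega
          have hk' : (k' : ℕ) = m - 1 ∨ (k' : ℕ) = m := by have := k'.isLt; omega
          have hrd : r ≠ d := by
            intro h
            have h1 : (r.1 : ℕ) = m - 1 := hrR
            have h2 : (d.1 : ℕ) < m - 1 := hdD.2
            rw [h] at h1; omega
          simp only [hf, dif_neg h1, dif_neg h2] at hkk'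
          rcases hk with hk | hk <;> rcases hk' with hk' | hk'
          · exact Fin.ext (by omega)
          · rw [if_pos hk, if_neg (by omega)] at hkk'; exact absurd hkk' hrd
          · rw [if_neg (by omega), if_pos hk'] at hkk'; exact absurd hkk'.symm hrd
          · exact Fin.ext (by omega)
      · intro k
        by_cases h1 : (k : ℕ) < m - 1
        · simp only [hf, dif_pos h1]; exact hgU _ _
        · simp only [hf, dif_neg h1]
          by_cases h3 : (k : ℕ) = m - 1
          · rw [if_pos h3]; exact hrU
          · rw [if_neg h3]; exact hdU
    · push_neg at hcol
      obtain ⟨j, hj, hjfree⟩ := hcol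
      obtain ⟨x, hx, hxU⟩ := hcon _ (Br.cross i j hi hj)
      rcases hx with hx | hx
      · exact hifree x hx hxU
      · exact hjfree x hx hxU


lemma noWin (hm : 1 < m) : ∀ {U : Set (V m)} {v : V m}, MonCopsWin (gridE m) m U v →
    ∀ B, Br m B → v ∈ B → (∀ x ∈ B, x ∉ U) → False := by
  intro U v h
  induction h with
  | step U v U' hfin hcard hmon hnext IH =>
    intro B hB hv hdis
    obtain ⟨B', hB', hB'free⟩ := freeElem hm hfin hcard
    obtain ⟨w, hw, hpath⟩ := connTo hm hB hB' hv
    have hreach : w ∈ reachAvoid (gridE m) (U ∩ U') v := by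
      refine Relation.ReflTransGen.mono ?_ _ _ hpath
      rintro a b ⟨hab, hbB⟩
      refine ⟨hab, ?_⟩
      rintro ⟨hbU, hbU'⟩
      rcases hbB with hbB | hbB
      · exact hdis b hbB hbU
      · exact hB'free b hbB hbU'
    exact IH w hreach (hB'free w hw) B' hB' hw hB'free

end GridAux

/-- **The `m × m` grid has tree-width at least `m`:** in the cops-and-robber game
on the grid, `m` cops do not have a monotone winning strategy against a visible
robber (who may choose his initial vertex). -/
theorem grid_treewidth_ge (m : ℕ) (hm : 1 < m) :
    ¬ ∀ v : Fin m × Fin m, MonCopsWin (gridE m) m ∅ v := by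
  intro hall
  have h0 : (0 : ℕ) < m - 1 := by omega
  have hm0 : 0 < m := by omega
  set v0 : Fin m × Fin m := (⟨0, hm0⟩, ⟨0, hm0⟩) with hv0
  refine GridAux.noWin hm (hall v0)
    (GridAux.rowArm m ⟨0, hm0⟩ ∪ GridAux.colArm m ⟨0, hm0⟩)
    (GridAux.Br.cross _ _ h0 h0) (Or.inl ⟨rfl, by simpa [hv0] using h0⟩) ?_
  intro x _ hx
  exact hx
end

section
/- Let G be a directed graph on which k cops have a (not necessarily monotone) winning strategy in the cops-and-robber game, i.e., non-monotone DAG-width nmdw(G) ≤ k. Let Ḡ be the powerset graph of a game with imperfect information on G whose ∼ⱽ-equivalence classes have size at most r. Then nmdw(Ḡ) ≤ k · r · 2^{r−1}. -/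
/-- Win of `k` cops against one visible robber, monotonicity not required:
non-monotone DAG-width `nmdw(G) ≤ k` iff `k` cops win from every position. -/
inductive NonMonCopsWin {V : Type*} (E : V → V → Prop) (k : ℕ) : Set V → V → Prop
  | step (U : Set V) (v : V) (U' : Set V) (hfin : U'.Finite) (hcard : U'.ncard ≤ k)
      (h : ∀ v' ∈ reachAvoid E (U ∩ U') v, v' ∉ U' → NonMonCopsWin E k U' v') :
      NonMonCopsWin E k U v

/-- The edge relation of the powerset graph. -/
def powEdge {V A : Type*} (Ea : A → V → V → Prop) (simV : V → V → Prop)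
    (simA : A → A → Prop) (s t : Set V) : Prop :=
  ∃ a, ∃ u ∈ Post Ea {b | simA b a} s,
    t = Post Ea {b | simA b a} s ∩ {w | simV u w}

/-- Vertices of the powerset graph: nonempty subsets of `∼ⱽ`-classes. -/
def powVertices {V : Type*} (simV : V → V → Prop) : Set (Set V) :=
  {s | s.Nonempty ∧ ∃ u, s ⊆ {w | simV u w}}

universe u u2

open Set

/-- Auxiliary: number of subsets of a finite set is at most `2 ^ card`. -/
lemma subsets_ncard_le {V : Type u2} {D : Set V} (hD : D.Finite) :
    {S : Set V | S ⊆ D}.ncard ≤ 2 ^ D.ncard := by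
  refine Set.Finite.induction_on
    (motive := fun D _ => {S : Set V | S ⊆ D}.ncard ≤ 2 ^ D.ncard) D hD ?_ ?_
  · have h : {S : Set V | S ⊆ (∅ : Set V)} = {(∅ : Set V)} := by
      ext S; simp [Set.subset_empty_iff]
    simp [h]
  · intro a s ha hsfin ih
    have hsplit : {S : Set V | S ⊆ insert a s} =
        {S : Set V | S ⊆ s} ∪ (insert a '' {S : Set V | S ⊆ s}) := by
      ext S
      simp only [Set.mem_setOf_eq, Set.mem_union, Set.mem_image]
      constructor
      · intro h
        by_cases haS : a ∈ S
        · right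
          refine ⟨S \ {a}, ?_, ?_⟩
          · intro x hx
            rcases h hx.1 with rfl | hxs
            · exact absurd rfl hx.2
            · exact hxs
          · rw [Set.insert_diff_singleton, Set.insert_eq_self.mpr haS]
        · left
          intro x hx
          rcases h hx with rfl | hxs
          · exact absurd hx haS
          · exact hxs
      · rintro (h | ⟨S0, hS0, rfl⟩)
        · exact h.trans (Set.subset_insert _ _)
        · exact Set.insert_subset_insert hS0
    have hfin : {S : Set V | S ⊆ s}.Finite := hsfin.finite_subsets
    calc {S : Set V | S ⊆ insert a s}.ncard
        ≤ {S : Set V | S ⊆ s}.ncard + (insert a '' {S : Set V | S ⊆ s}).ncard := by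
          rw [hsplit]; exact Set.ncard_union_le _ _
      _ ≤ {S : Set V | S ⊆ s}.ncard + {S : Set V | S ⊆ s}.ncard := by
          have := Set.ncard_image_le (f := insert a) (s := {S : Set V | S ⊆ s}) hfin
          omega
      _ ≤ 2 ^ s.ncard + 2 ^ s.ncard := by omega
      _ = 2 ^ (insert a s).ncard := by
          rw [Set.ncard_insert_of_notMem ha hsfin, pow_succ]; ring

/-- Auxiliary: finite bounded union cardinality bound. -/
lemma biUnion_ncard_le {β : Type u2} {V : Type u} {s : Set β} (hs : s.Finite)
    {f : β → Set V} {m : ℕ}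
    (hf : ∀ b ∈ s, (f b).Finite) (hm : ∀ b ∈ s, (f b).ncard ≤ m) :
    (⋃ b ∈ s, f b).Finite ∧ (⋃ b ∈ s, f b).ncard ≤ s.ncard * m := by
  refine Set.Finite.induction_on
    (motive := fun s _ => (∀ b ∈ s, (f b).Finite) → (∀ b ∈ s, (f b).ncard ≤ m) →
      (⋃ b ∈ s, f b).Finite ∧ (⋃ b ∈ s, f b).ncard ≤ s.ncard * m)
    s hs ?_ ?_ hf hm
  · intro _ _; simp
  · intro a s' ha hs' ih hf' hm'
    have hU : (⋃ b ∈ insert a s', f b) = f a ∪ ⋃ b ∈ s', f b := by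
      simp [Set.biUnion_insert]
    obtain ⟨ihfin, ihcard⟩ := ih (fun b hb => hf' b (Set.mem_insert_of_mem _ hb))
      (fun b hb => hm' b (Set.mem_insert_of_mem _ hb))
    constructor
    · rw [hU]; exact (hf' a (Set.mem_insert _ _)).union ihfin
    · rw [hU, Set.ncard_insert_of_notMem ha hs']
      calc (f a ∪ ⋃ b ∈ s', f b).ncard ≤ (f a).ncard + (⋃ b ∈ s', f b).ncard :=
            Set.ncard_union_le _ _
        _ ≤ m + s'.ncard * m := by
            have := hm' a (Set.mem_insert _ _); omega
        _ = (s'.ncard + 1) * m := by ring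

/-- Ordinal-ranked version of `NonMonCopsWin`. -/
inductive WinR {V : Type u} (E : V → V → Prop) (k : ℕ) :
    Ordinal.{u} → Set V → V → Prop
  | step (α : Ordinal.{u}) (U : Set V) (v : V) (U' : Set V) (hfin : U'.Finite)
      (hcard : U'.ncard ≤ k) (rk : V → Ordinal.{u})
      (hrk : ∀ v' ∈ reachAvoid E (U ∩ U') v, v' ∉ U' → rk v' < α)
      (h : ∀ v' ∈ reachAvoid E (U ∩ U') v, v' ∉ U' → WinR E k (rk v') U' v') :
      WinR E k α U v

/-- Every winning position has an ordinal rank. -/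
lemma toRank {V : Type u} {E : V → V → Prop} {k : ℕ} {U : Set V} {v : V}
    (h : NonMonCopsWin E k U v) : ∃ α : Ordinal.{u}, WinR E k α U v := by
  induction h with
  | step U v U' hfin hcard h ih =>
    classical
    let T := {p : V // p ∈ reachAvoid E (U ∩ U') v ∧ p ∉ U'}
    choose g hg using fun p : T => ih p.1 p.2.1 p.2.2
    set rk : V → Ordinal.{u} := fun v' =>
      if h : v' ∈ reachAvoid E (U ∩ U') v ∧ v' ∉ U' then g ⟨v', h⟩ else 0 with hrkdef
    refine ⟨Order.succ (⨆ p : T, g p), WinR.step _ _ _ U' hfin hcard rk ?_ ?_⟩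
    · intro v' h1 h2
      have : rk v' = g ⟨v', h1, h2⟩ := dif_pos ⟨h1, h2⟩
      rw [this]
      exact Order.lt_succ_iff.mpr (le_ciSup (Ordinal.bddAbove_range _) _)
    · intro v' h1 h2
      have : rk v' = g ⟨v', h1, h2⟩ := dif_pos ⟨h1, h2⟩
      rw [this]
      exact hg _

/-- Main induction for the powerset construction. -/
lemma powerset_main {V : Type u} {A : Type u2}
    (Ea : A → V → V → Prop) (simV : V → V → Prop) (simA : A → A → Prop)
    (hV : Equivalence simV) (k r : ℕ)
    (hclassfin : ∀ v : V, {w | simV v w}.Finite)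
    (hclasscard : ∀ v : V, {w | simV v w}.ncard ≤ r) :
    ∀ α : Ordinal.{u}, ∀ s ∈ powVertices simV,
      ∀ (W : Set (Set V)) (Uf : V → Set V) (g : V → Ordinal.{u}),
      (∀ T ∈ powVertices simV, (T ∩ ⋃ v ∈ s, Uf v).Nonempty → T ∈ W) →
      (∀ v ∈ s, g v < α ∧ WinR (fun x y => ∃ a, Ea a x y) k (g v) (Uf v) v) →
      NonMonCopsWin (powEdge Ea simV simA) (k * r * 2 ^ (r - 1)) W s := by
  intro α
  induction α using Ordinal.induction with
  | _ α IH =>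
  intro s hs W Uf g hcov hfam
  classical
  obtain ⟨hsne, u0, hsub⟩ := hs
  have hsfin : s.Finite := (hclassfin u0).subset hsub
  have hscard : s.ncard ≤ r :=
    le_trans (Set.ncard_le_ncard hsub (hclassfin u0)) (hclasscard u0)
  set E : V → V → Prop := fun x y => ∃ a, Ea a x y with hE
  -- choose the cops' answers for each possible robber vertex
  have hch : ∀ v : V, ∃ U' : Set V, U'.Finite ∧ U'.ncard ≤ k ∧
      (v ∈ s → ∀ v' ∈ reachAvoid E (Uf v ∩ U') v, v' ∉ U' →
        ∃ β, β < g v ∧ WinR E k β U' v') := by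
    intro v
    by_cases hv : v ∈ s
    · rcases (hfam v hv).2 with ⟨_, _, _, U', hfin, hcard, rk, hrk, h⟩
      exact ⟨U', hfin, hcard, fun _ v' h1 h2 =>
        ⟨rk v', hrk v' h1 h2, h v' h1 h2⟩⟩
    · exact ⟨∅, Set.finite_empty, by simp, fun h => absurd h hv⟩
  choose U' hU'fin hU'card hU'cont using hch
  set W' : Set V := ⋃ v ∈ s, U' v with hW'def
  set hatW' : Set (Set V) := {T | T ∈ powVertices simV ∧ (T ∩ W').Nonempty}
    with hhatW'def
  -- cardinality bounds
  obtain ⟨hW'fin, hW'card⟩ := biUnion_ncard_le hsfin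
    (fun v _ => hU'fin v) (fun v _ => hU'card v)
  have hPu : ∀ u : V,
      {T : Set V | u ∈ T ∧ T ⊆ {w | simV u w}}.Finite ∧
      {T : Set V | u ∈ T ∧ T ⊆ {w | simV u w}}.ncard ≤ 2 ^ (r - 1) := by
    intro u
    have hCfin := hclassfin u
    have hsubfin : {S : Set V | S ⊆ {w | simV u w} \ {u}}.Finite :=
      hCfin.diff.finite_subsets
    constructor
    · exact hCfin.finite_subsets.subset (fun T hT => hT.2)
    · calc {T : Set V | u ∈ T ∧ T ⊆ {w | simV u w}}.ncard
          ≤ {S : Set V | S ⊆ {w | simV u w} \ {u}}.ncard := by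
            refine Set.ncard_le_ncard_of_injOn (fun T => T \ {u}) ?_ ?_ hsubfin
            · intro T hT
              exact Set.diff_subset_diff_left hT.2
            · intro T1 h1 T2 h2 heq
              have heq' : T1 \ {u} = T2 \ {u} := heq
              ext x
              by_cases hx : x = u
              · subst hx; simp [h1.1, h2.1]
              · constructor
                · intro hxT
                  have hmem : x ∈ T1 \ {u} := ⟨hxT, hx⟩
                  rw [heq'] at hmem; exact hmem.1
                · intro hxT
                  have hmem : x ∈ T2 \ {u} := ⟨hxT, hx⟩
                  rw [← heq'] at hmem; exact hmem.1
        _ ≤ 2 ^ ({w | simV u w} \ {u}).ncard := subsets_ncard_le hCfin.diff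
        _ ≤ 2 ^ (r - 1) := by
            refine Nat.pow_le_pow_right (by norm_num) ?_
            have hu : u ∈ {w | simV u w} := hV.refl u
            rw [Set.ncard_diff_singleton_of_mem hu]
            exact Nat.sub_le_sub_right (hclasscard u) 1
  have hhatsub : hatW' ⊆ ⋃ u ∈ W', {T : Set V | u ∈ T ∧ T ⊆ {w | simV u w}} := by
    rintro T ⟨⟨hTne, x, hTx⟩, u, huT, huW'⟩
    refine Set.mem_biUnion huW' ⟨huT, fun w hw => ?_⟩
    exact hV.trans (hV.symm (hTx huT)) (hTx hw)
  obtain ⟨hBfin, hBcard⟩ := biUnion_ncard_le hW'fin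
    (fun u _ => (hPu u).1) (fun u _ => (hPu u).2)
  have hhatfin : hatW'.Finite := hBfin.subset hhatsub
  have hhatcard : hatW'.ncard ≤ k * r * 2 ^ (r - 1) := by
    calc hatW'.ncard ≤ (⋃ u ∈ W', {T : Set V | u ∈ T ∧ T ⊆ {w | simV u w}}).ncard :=
          Set.ncard_le_ncard hhatsub hBfin
      _ ≤ W'.ncard * 2 ^ (r - 1) := hBcard
      _ ≤ (s.ncard * k) * 2 ^ (r - 1) := Nat.mul_le_mul_right _ hW'card
      _ ≤ (r * k) * 2 ^ (r - 1) :=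
          Nat.mul_le_mul_right _ (Nat.mul_le_mul_right _ hscard)
      _ = k * r * 2 ^ (r - 1) := by ring
  refine NonMonCopsWin.step W s hatW' hhatfin hhatcard ?_
  intro t ht htnot
  -- trace robber moves back to the original graph
  have key : ∀ t' ∈ reachAvoid (powEdge Ea simV simA) (W ∩ hatW') s,
      t' ∈ powVertices simV ∧
        ∀ w ∈ t', ∃ v ∈ s, w ∈ reachAvoid E (Uf v ∩ U' v) v := by
    intro t' ht'
    simp only [reachAvoid, Set.mem_setOf_eq] at ht'
    induction ht' with
    | refl =>
      exact ⟨⟨hsne, u0, hsub⟩, fun w hw => ⟨w, hw, Relation.ReflTransGen.refl⟩⟩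
    | @tail m b hpath hstep ih =>
      obtain ⟨hedge, hbnot⟩ := hstep
      obtain ⟨a, u, hu, rfl⟩ := hedge
      have hbpow : Post Ea {b | simA b a} m ∩ {w | simV u w} ∈ powVertices simV :=
        ⟨⟨u, hu, hV.refl u⟩, u, Set.inter_subset_right⟩
      refine ⟨hbpow, ?_⟩
      have hside :
          (∀ w ∈ Post Ea {b | simA b a} m ∩ {w | simV u w}, w ∉ ⋃ v ∈ s, Uf v) ∨
          (∀ w ∈ Post Ea {b | simA b a} m ∩ {w | simV u w}, w ∉ W') := by
        by_cases h1 : Post Ea {b | simA b a} m ∩ {w | simV u w} ∈ W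
        · right; intro w hw hwW'
          exact hbnot ⟨h1, hbpow, ⟨w, hw, hwW'⟩⟩
        · left; intro w hw hwU
          exact h1 (hcov _ hbpow ⟨w, hw, hwU⟩)
      intro w hw
      obtain ⟨v0, hv0m, bb, hbb, hEab⟩ := hw.1
      obtain ⟨v, hvs, hreach⟩ := ih.2 v0 hv0m
      refine ⟨v, hvs, Relation.ReflTransGen.tail hreach ⟨⟨bb, hEab⟩, ?_⟩⟩
      rintro ⟨hw1, hw2⟩
      rcases hside with h | h
      · exact h w hw (Set.mem_biUnion hvs hw1)
      · exact h w hw (Set.mem_biUnion hvs hw2)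
  obtain ⟨htpow, htrace⟩ := key t ht
  have htW' : ∀ w ∈ t, w ∉ W' := by
    intro w hw hwW'
    exact htnot ⟨htpow, ⟨w, hw, hwW'⟩⟩
  -- a common ordinal bound
  obtain ⟨v₀, hv₀s, hv₀max⟩ := Set.Finite.exists_maximalFor g s hsfin hsne
  have hγ : g v₀ < α := (hfam v₀ hv₀s).1
  have hle : ∀ v ∈ s, g v ≤ g v₀ := by
    intro v hv
    rcases le_total (g v) (g v₀) with h | h
    · exact h
    · exact hv₀max (j := v) hv h
  -- new family
  have hch2 : ∀ w : V, ∃ (Uw : Set V) (βw : Ordinal.{u}),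
      w ∈ t → Uw ⊆ W' ∧ βw < g v₀ ∧ WinR E k βw Uw w := by
    intro w
    by_cases hw : w ∈ t
    · obtain ⟨v, hvs, hreach⟩ := htrace w hw
      obtain ⟨β, hβ, hwin⟩ := hU'cont v hvs w hreach
        (fun hmem => htW' w hw (Set.mem_biUnion hvs hmem))
      exact ⟨U' v, β, fun _ =>
        ⟨fun x hx => Set.mem_biUnion hvs hx, lt_of_lt_of_le hβ (hle v hvs), hwin⟩⟩
    · exact ⟨∅, 0, fun h => absurd h hw⟩
  choose Uf2 g2 h2 using hch2
  refine IH (g v₀) hγ t htpow hatW' Uf2 g2 ?_ ?_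
  · rintro T hT ⟨x, hxT, hxU⟩
    rw [Set.mem_iUnion₂] at hxU
    obtain ⟨w, hw, hx⟩ := hxU
    exact ⟨hT, ⟨x, hxT, (h2 w hw).1 hx⟩⟩
  · exact fun w hw => ⟨(h2 w hw).2.1, (h2 w hw).2.2⟩

/-- **Non-monotone DAG-width is preserved by the powerset construction.**
If `k` cops have a (not necessarily monotone) winning strategy on `G` and every
`∼ⱽ`-class has size at most `r`, then `k · r · 2^(r−1)` cops have a (not
necessarily monotone) winning strategy on the powerset graph `Ḡ`, i.e.
`nmdw(Ḡ) ≤ k · r · 2^(r−1)`. -/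
theorem nonmonotone_dagwidth_powerset {V A : Type*}
    (Ea : A → V → V → Prop) (simV : V → V → Prop) (simA : A → A → Prop)
    (hV : Equivalence simV) (hA : Equivalence simA) (k r : ℕ)
    (hclassfin : ∀ v : V, {w | simV v w}.Finite)
    (hclasscard : ∀ v : V, {w | simV v w}.ncard ≤ r)
    (hwin : ∀ v : V, NonMonCopsWin (fun x y => ∃ a, Ea a x y) k ∅ v) :
    ∀ s ∈ powVertices simV,
      NonMonCopsWin (powEdge Ea simV simA) (k * r * 2 ^ (r - 1)) ∅ s := by
    classical
  intro s hs
  have hrank : ∀ v : V, ∃ α, WinR (fun x y => ∃ a, Ea a x y) k α (∅ : Set V) v :=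
    fun v => toRank (hwin v)
  choose g hg using hrank
  obtain ⟨hsne, u0, hsub⟩ := hs
  obtain ⟨v₀, hv₀s, hmax⟩ :=
    Set.Finite.exists_maximalFor g s ((hclassfin u0).subset hsub) hsne
  refine powerset_main Ea simV simA hV k r hclassfin hclasscard
    (Order.succ (g v₀)) s ⟨hsne, u0, hsub⟩ ∅ (fun _ => ∅) g ?_ ?_
  · intro T hT hne
    exfalso; simpa using hne
  · intro v hv
    constructor
    · have hle : g v ≤ g v₀ := by
        rcases le_total (g v) (g v₀) with h | h
        · exact h
        · exact hmax (j := v) hv h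
      exact lt_of_le_of_lt hle (Order.lt_succ _)
    · exact hg v
end

section
/- Let G be a directed graph with dpw(G) ≤ k, i.e., k+1 cops have a monotone winning strategy against an invisible robber on G. Let Ḡ be the powerset graph of a game with imperfect information on G whose ∼ⱽ-classes have size at most r. Then dpw(Ḡ) ≤ (k+1) · 2^{r−1} − 1, i.e., (k+1)·2^{r−1} cops have a monotone winning strategy against an invisible robber on Ḡ. -/
/-- Monotone clearing of the contamination set `R` by `k` cops in the
invisible-robber (directed path-width) game: `dpw(G) ≤ k − 1` iff
`InvClear E k ∅ univ`. -/
inductive InvClear {V : Type*} (E : V → V → Prop) (k : ℕ) : Set V → Set V → Prop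
  | empty (U : Set V) : InvClear E k U ∅
  | step (U R U' : Set V) (hfin : U'.Finite) (hcard : U'.ncard ≤ k)
      (hmon : {w | ∃ x ∈ R, w ∈ reachAvoid E (U ∩ U') x} \ U' ⊆ R)
      (h : InvClear E k U' ({w | ∃ x ∈ R, w ∈ reachAvoid E (U ∩ U') x} \ U')) :
      InvClear E k U R

/-- The powerset graph: the powerset edge relation restricted to the vertices
of the powerset graph. -/
def powEdgeRes {V A : Type*} (Ea : A → V → V → Prop) (simV : V → V → Prop)
    (simA : A → A → Prop) (s t : Set V) : Prop :=
  powEdge Ea simV simA s t ∧ s ∈ powVertices simV ∧ t ∈ powVertices simV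


/-- Lift of a cop set to the powerset graph. -/
def liftCops {V : Type*} (simV : V → V → Prop) (U : Set V) : Set (Set V) :=
  {s | s ∈ powVertices simV ∧ (s ∩ U).Nonempty}

lemma ncard_subsets_le {α : Type*} {a : Set α} (ha : a.Finite) :
    {t : Set α | t ⊆ a}.ncard ≤ 2 ^ a.ncard := by
  have heq : {t : Set α | t ⊆ a} =
      (fun f : Finset α => (↑f : Set α)) '' (ha.toFinset.powerset : Set (Finset α)) := by
    ext t
    constructor
    · intro (ht : t ⊆ a)
      have htf : t.Finite := ha.subset ht
      refine ⟨htf.toFinset, ?_, by simp⟩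
      simp only [Finset.mem_coe, Finset.mem_powerset]
      intro x hx
      simp only [Set.Finite.mem_toFinset] at hx ⊢
      exact ht hx
    · rintro ⟨f, hf, rfl⟩
      simp only [Finset.mem_coe, Finset.mem_powerset] at hf
      intro x hx
      have := hf hx
      simpa using this
  rw [heq]
  calc ((fun f : Finset α => (↑f : Set α)) '' ↑ha.toFinset.powerset).ncard
      ≤ (↑ha.toFinset.powerset : Set (Finset α)).ncard :=
        Set.ncard_image_le (ha.toFinset.powerset.finite_toSet)
    _ = ha.toFinset.powerset.card := Set.ncard_coe_finset _
    _ = 2 ^ ha.toFinset.card := Finset.card_powerset _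
    _ = 2 ^ a.ncard := by rw [Set.ncard_eq_toFinset_card a ha]

lemma liftCops_finite_subset {V : Type*} {simV : V → V → Prop} (hV : Equivalence simV)
    (U : Set V) :
    liftCops simV U ⊆ ⋃ u ∈ U, {s : Set V | u ∈ s ∧ s ⊆ {w | simV u w}} := by
  rintro s ⟨⟨hne, v, hsv⟩, ⟨u, hu, huU⟩⟩
  refine Set.mem_biUnion huU ⟨hu, ?_⟩
  intro w hw
  exact hV.trans (hV.symm (hsv hu)) (hsv hw)

lemma class_part_card {V : Type*} {simV : V → V → Prop} (hV : Equivalence simV) {r : ℕ}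
    (hclassfin : ∀ v : V, {w | simV v w}.Finite)
    (hclasscard : ∀ v : V, {w | simV v w}.ncard ≤ r) (u : V) :
    {s : Set V | u ∈ s ∧ s ⊆ {w | simV u w}}.Finite ∧
    {s : Set V | u ∈ s ∧ s ⊆ {w | simV u w}}.ncard ≤ 2 ^ (r - 1) := by
  have huc : u ∈ {w | simV u w} := hV.refl u
  have hd : ({w | simV u w} \ {u}).Finite := (hclassfin u).diff
  have hsub : {s : Set V | u ∈ s ∧ s ⊆ {w | simV u w}} ⊆
      (insert u) '' {t : Set V | t ⊆ {w | simV u w} \ {u}} := by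
    rintro s ⟨hus, hsc⟩
    refine ⟨s \ {u}, ?_, ?_⟩
    · intro x hx
      exact ⟨hsc hx.1, hx.2⟩
    · rw [Set.insert_diff_singleton, Set.insert_eq_self.mpr hus]
  have hfin2 : {t : Set V | t ⊆ {w | simV u w} \ {u}}.Finite := hd.finite_subsets
  constructor
  · exact (hfin2.image _).subset hsub
  · calc {s : Set V | u ∈ s ∧ s ⊆ {w | simV u w}}.ncard
        ≤ ((insert u) '' {t : Set V | t ⊆ {w | simV u w} \ {u}}).ncard :=
          Set.ncard_le_ncard hsub (hfin2.image _)
      _ ≤ {t : Set V | t ⊆ {w | simV u w} \ {u}}.ncard := Set.ncard_image_le hfin2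
      _ ≤ 2 ^ ({w | simV u w} \ {u}).ncard := ncard_subsets_le hd
      _ ≤ 2 ^ (r - 1) := by
          apply Nat.pow_le_pow_right (by norm_num)
          rw [Set.ncard_diff_singleton_of_mem huc]
          exact Nat.sub_le_sub_right (hclasscard u) 1

lemma liftCops_card {V : Type*} {simV : V → V → Prop} (hV : Equivalence simV) {r : ℕ}
    (hclassfin : ∀ v : V, {w | simV v w}.Finite)
    (hclasscard : ∀ v : V, {w | simV v w}.ncard ≤ r)
    {U : Set V} (hU : U.Finite) :
    (liftCops simV U).Finite ∧ (liftCops simV U).ncard ≤ U.ncard * 2 ^ (r - 1) := by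
  have hGfin := fun u : V => (class_part_card hV hclassfin hclasscard u).1
  have hGcard := fun u : V => (class_part_card hV hclassfin hclasscard u).2
  have hbig : (⋃ u ∈ U, {s : Set V | u ∈ s ∧ s ⊆ {w | simV u w}}).Finite :=
    hU.biUnion (fun u _ => hGfin u)
  constructor
  · exact hbig.subset (liftCops_finite_subset hV U)
  · refine le_trans (Set.ncard_le_ncard (liftCops_finite_subset hV U) hbig) ?_
    clear hbig
    induction U, hU using Set.Finite.induction_on with
    | empty => simp
    | @insert a s has hs ih =>
        rw [Set.biUnion_insert]
        calc ({t : Set V | a ∈ t ∧ t ⊆ {w | simV a w}} ∪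
              ⋃ u ∈ s, {t : Set V | u ∈ t ∧ t ⊆ {w | simV u w}}).ncard
            ≤ {t : Set V | a ∈ t ∧ t ⊆ {w | simV a w}}.ncard +
              (⋃ u ∈ s, {t : Set V | u ∈ t ∧ t ⊆ {w | simV u w}}).ncard :=
              Set.ncard_union_le _ _
          _ ≤ 2 ^ (r - 1) + s.ncard * 2 ^ (r - 1) := Nat.add_le_add (hGcard a) ih
          _ = (s.ncard + 1) * 2 ^ (r - 1) := by ring
          _ = (insert a s).ncard * 2 ^ (r - 1) := by
              rw [Set.ncard_insert_of_notMem has hs]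

lemma mem_reachAvoid {V : Type*} {E : V → V → Prop} {X : Set V} {v w : V} :
    w ∈ reachAvoid E X v ↔ Relation.ReflTransGen (fun a b => E a b ∧ b ∉ X) v w := Iff.rfl

lemma main_lift {V A : Type*} (Ea : A → V → V → Prop) (simV : V → V → Prop) (simA : A → A → Prop)
    (hV : Equivalence simV) (k r : ℕ)
    (hclassfin : ∀ v : V, {w | simV v w}.Finite)
    (hclasscard : ∀ v : V, {w | simV v w}.ncard ≤ r)
    {U R : Set V} (h : InvClear (fun x y => ∃ a, Ea a x y) (k + 1) U R) :
    ∀ S : Set (Set V), R ∩ U = ∅ → S ⊆ powVertices simV →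
    (∀ t ∈ S, t ⊆ R) →
    (∀ s ∈ S, ∀ t, powEdgeRes Ea simV simA s t → t ∉ liftCops simV U → t ∈ S) →
    InvClear (powEdgeRes Ea simV simA) ((k + 1) * 2 ^ (r - 1)) (liftCops simV U) S := by
  induction h with
  | empty U =>
    intro S hRU hSV hSR hScl
    have hS : S = ∅ := by
      ext t
      simp only [Set.mem_empty_iff_false, iff_false]
      intro ht
      obtain ⟨x, hx⟩ := (hSV ht).1
      exact hSR t ht hx
    rw [hS]
    exact InvClear.empty _
  | @step U R U' hfin hcard hmon h ih =>
    intro S hRU hSV hSR hScl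
    -- every vertex set reachable in the powerset graph (avoiding the lifted
    -- guarded set) from a contaminated set stays contaminated
    have key : ∀ s ∈ S, ∀ t, t ∈ reachAvoid (powEdgeRes Ea simV simA)
        (liftCops simV U ∩ liftCops simV U') s → t ∈ S := by
      intro s hs t ht
      rw [mem_reachAvoid] at ht
      induction ht with
      | refl => exact hs
      | @tail b c hb hbc ih2 =>
        obtain ⟨hedge, hcX⟩ := hbc
        have hbS : b ∈ S := ih2
        have hbR : b ⊆ R := hSR b hbS
        have hcpow : c ∈ powVertices simV := hedge.2.2
        have hcd : c ∩ U = ∅ ∨ c ∩ U' = ∅ := by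
          by_contra hcon
          push_neg at hcon
          exact hcX ⟨⟨hcpow, hcon.1⟩,
            ⟨hcpow, hcon.2⟩⟩
        have hcRr : c ⊆ {w | ∃ x ∈ R, w ∈ reachAvoid (fun x y => ∃ a, Ea a x y) (U ∩ U') x} := by
          intro w hw
          obtain ⟨a, u, hu, hceq⟩ := hedge.1
          have hw' := hw
          rw [hceq] at hw'
          obtain ⟨⟨x, hxb, bact, hbact, hEa⟩, hsim⟩ := hw'
          have hwUU' : w ∉ U ∩ U' := by
            rcases hcd with h0 | h0
            · intro hmem
              exact absurd (Set.mem_inter hw hmem.1) (by rw [h0]; exact fun hh => hh)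
            · intro hmem
              exact absurd (Set.mem_inter hw hmem.2) (by rw [h0]; exact fun hh => hh)
          exact ⟨x, hbR hxb,
            Relation.ReflTransGen.tail Relation.ReflTransGen.refl ⟨⟨bact, hEa⟩, hwUU'⟩⟩
        have hcU : c ∩ U = ∅ := by
          rcases hcd with h0 | h0
          · exact h0
          · ext w
            simp only [Set.mem_inter_iff, Set.mem_empty_iff_false, iff_false, not_and]
            intro hwc hwU
            have hwU' : w ∉ U' := fun hwU' =>
              absurd (Set.mem_inter hwc hwU') (by rw [h0]; exact fun hh => hh)
            have hwR : w ∈ R := hmon ⟨hcRr hwc, hwU'⟩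
            exact absurd (Set.mem_inter hwR hwU) (by rw [hRU]; exact fun hh => hh)
        have hcnl : c ∉ liftCops simV U := by
          rintro ⟨_, hne⟩
          rw [hcU] at hne
          exact Set.not_nonempty_empty hne
        exact hScl b hbS c hedge hcnl
    refine InvClear.step _ _ (liftCops simV U') ?_ ?_ ?_ ?_
    · exact (liftCops_card hV hclassfin hclasscard hfin).1
    · exact le_trans (liftCops_card hV hclassfin hclasscard hfin).2
        (Nat.mul_le_mul_right _ hcard)
    · rintro t ⟨⟨s, hs, hr⟩, -⟩
      exact key s hs t hr
    · apply ih
      · ext w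
        simp only [Set.mem_inter_iff, Set.mem_diff, Set.mem_empty_iff_false, iff_false]
        tauto
      · rintro t ⟨⟨s, hs, hr⟩, -⟩
        exact hSV (key s hs t hr)
      · rintro t ⟨⟨s, hs, hr⟩, htU'⟩
        have htS : t ∈ S := key s hs t hr
        have htR : t ⊆ R := hSR t htS
        have htpow : t ∈ powVertices simV := hSV htS
        have htU'e : t ∩ U' = ∅ := by
          by_contra hcon
          exact htU' ⟨htpow, Set.nonempty_iff_ne_empty.mpr hcon⟩
        intro w hw
        refine ⟨⟨w, htR hw, Relation.ReflTransGen.refl⟩, fun hwU' =>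
          absurd (Set.mem_inter hw hwU') (by rw [htU'e]; exact fun hh => hh)⟩
      · rintro s ⟨⟨x, hx, hrx⟩, -⟩ t hedge htU'
        have htX : t ∉ liftCops simV U ∩ liftCops simV U' := fun hmem => htU' hmem.2
        exact ⟨⟨x, hx, Relation.ReflTransGen.tail hrx ⟨hedge, htX⟩⟩, htU'⟩


/-- **Directed path-width is preserved by the powerset construction.**
If `dpw(G) ≤ k`, i.e. `k+1` cops have a monotone winning strategy against an
invisible robber on `G`, and every `∼ⱽ`-class has size at most `r`, then
`(k+1) · 2^(r−1)` cops have a monotone winning strategy against an invisible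
robber on the powerset graph `Ḡ`; i.e. `dpw(Ḡ) ≤ (k+1) · 2^(r−1) − 1`. -/
theorem directed_pathwidth_powerset {V A : Type*}
    (Ea : A → V → V → Prop) (simV : V → V → Prop) (simA : A → A → Prop)
    (hV : Equivalence simV) (hA : Equivalence simA) (k r : ℕ)
    (hclassfin : ∀ v : V, {w | simV v w}.Finite)
    (hclasscard : ∀ v : V, {w | simV v w}.ncard ≤ r)
    (hwin : InvClear (fun x y => ∃ a, Ea a x y) (k + 1) ∅ Set.univ) :
    InvClear (powEdgeRes Ea simV simA) ((k + 1) * 2 ^ (r - 1)) ∅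
      (powVertices simV) := by
  have h0 : liftCops simV (∅ : Set V) = ∅ := by
    ext s
    simp [liftCops]
  have hmain := main_lift Ea simV simA hV k r hclassfin hclasscard hwin
    (powVertices simV) (by simp) subset_rfl (fun t _ => Set.subset_univ t)
    (fun s hs t hedge _ => hedge.2.2)
  rwa [h0] at hmain
end

section
/- Let G be an undirected graph with tw(G)+1 ≤ k, i.e., k cops have a monotone winning strategy against one visible robber. Then for every r ≥ 1, r·k cops have a monotone winning strategy against r robbers on G; i.e., tw_r(G)+1 ≤ r·(tw(G)+1). -/
/-- Monotone win of `k` cops against (at most) `r` robbers that move along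
cop-free paths and may jump to each other. -/
inductive MonCopsWinMulti {V : Type*} (E : V → V → Prop) (k r : ℕ) : Set V → Set V → Prop
  | captured (U : Set V) : MonCopsWinMulti E k r U ∅
  | step (U R U' : Set V) (hfin : U'.Finite) (hcard : U'.ncard ≤ k)
      (hmon : ∀ u ∈ U \ U', ∀ x ∈ R, u ∉ reachAvoid E (U ∩ U') x)
      (h : ∀ R' : Set V, R'.Finite → R'.ncard ≤ r → R' ∩ U' = ∅ →
            (∀ y ∈ R', ∃ x ∈ R, y ∈ reachAvoid E (U ∩ U') x) →
            MonCopsWinMulti E k r U' R') :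
      MonCopsWinMulti E k r U R

namespace MultiRobberAux

universe u
variable {V : Type u}

/-- closure of `S`: `S` together with its neighbours. -/
def cl (E : V → V → Prop) (S : Set V) : Set V := S ∪ {u | ∃ w ∈ S, E u w ∨ E w u}

section reachLemmas
variable {E : V → V → Prop}

theorem subset_cl (S : Set V) : S ⊆ cl E S := Set.subset_union_left

theorem cl_mono {S T : Set V} (h : S ⊆ T) : cl E S ⊆ cl E T := by
  rintro u (hu | ⟨w, hw, hew⟩); exacts [Or.inl (h hu), Or.inr ⟨w, h hw, hew⟩]

theorem reach_refl (X : Set V) (v : V) : v ∈ reachAvoid E X v := Relation.ReflTransGen.refl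

theorem reach_step {X : Set V} {v a b : V} (ha : a ∈ reachAvoid E X v)
    (hab : E a b) (hb : b ∉ X) : b ∈ reachAvoid E X v :=
  Relation.ReflTransGen.tail ha ⟨hab, hb⟩

theorem reach_mono {X Y : Set V} (h : X ⊆ Y) (v : V) :
    reachAvoid E Y v ⊆ reachAvoid E X v := by
  intro w hw
  induction hw with
  | refl => exact reach_refl X v
  | tail _ hbc ih => exact reach_step ih hbc.1 (fun hc => hbc.2 (h hc))

theorem reach_trans {X : Set V} {v y : V} (hy : y ∈ reachAvoid E X v) :
    reachAvoid E X y ⊆ reachAvoid E X v := fun _ hw => Relation.ReflTransGen.trans hy hw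

theorem reach_closed {X : Set V} {v : V} {S : Set V} (hv : v ∈ S)
    (hS : ∀ a ∈ S, ∀ b, E a b → b ∉ X → b ∈ S) :
    reachAvoid E X v ⊆ S := by
  intro w hw
  induction hw with
  | refl => exact hv
  | tail _ hbc ih => exact hS _ ih _ hbc.1 hbc.2

theorem reach_avoid {X : Set V} {v w : V} (hv : v ∉ X) (hw : w ∈ reachAvoid E X v) :
    w ∉ X := by
  induction hw with
  | refl => exact hv
  | tail _ hbc _ => exact hbc.2

theorem reach_symm (hsym : Symmetric E) {X : Set V} {v w : V} (hv : v ∉ X)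
    (hw : w ∈ reachAvoid E X v) : v ∈ reachAvoid E X w := by
  induction hw with
  | refl => exact reach_refl X v
  | @tail b c hb hbc ih =>
      exact Relation.ReflTransGen.head ⟨hsym hbc.1, reach_avoid hv hb⟩ ih

theorem reach_eq_of_mem (hsym : Symmetric E) {X : Set V} {a b w : V}
    (ha : a ∉ X) (hb : b ∉ X) (hwa : w ∈ reachAvoid E X a) (hwb : w ∈ reachAvoid E X b) :
    reachAvoid E X a = reachAvoid E X b := by
  apply Set.Subset.antisymm
  · exact (reach_trans (reach_symm hsym ha hwa)).trans (reach_trans hwb)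
  · exact (reach_trans (reach_symm hsym hb hwb)).trans (reach_trans hwa)

end reachLemmas

/-- Normalized monotone winning strategy tree (Type-valued so depth can be measured). -/
inductive NWinT (E : V → V → Prop) (k : ℕ) : Set V → V → Type u where
  | step (U : Set V) (v : V) (U' : Set V) (hfin : U'.Finite) (hcard : U'.ncard ≤ k)
      (hloc : U' ⊆ cl E (reachAvoid E (U ∩ U') v))
      (hmon : ∀ u ∈ U \ U', u ∉ reachAvoid E (U ∩ U') v)
      (h : ∀ v', v' ∈ reachAvoid E (U ∩ U') v → v' ∉ U' → NWinT E k U' v') :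
      NWinT E k U v

variable {E : V → V → Prop} {k : ℕ}

def NWinT.move : ∀ {U : Set V} {v : V}, NWinT E k U v → Set V
  | _, _, .step _ _ U' _ _ _ _ _ => U'

theorem NWinT.move_fin : ∀ {U v} (t : NWinT E k U v), t.move.Finite
  | _, _, .step _ _ _ hfin _ _ _ _ => hfin

theorem NWinT.move_card : ∀ {U v} (t : NWinT E k U v), t.move.ncard ≤ k
  | _, _, .step _ _ _ _ hcard _ _ _ => hcard

theorem NWinT.loc : ∀ {U v} (t : NWinT E k U v),
    t.move ⊆ cl E (reachAvoid E (U ∩ t.move) v)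
  | _, _, .step _ _ _ _ _ hloc _ _ => hloc

theorem NWinT.mon : ∀ {U v} (t : NWinT E k U v),
    ∀ u ∈ U \ t.move, u ∉ reachAvoid E (U ∩ t.move) v
  | _, _, .step _ _ _ _ _ _ hmon _ => hmon

def NWinT.child : ∀ {U v} (t : NWinT E k U v),
    ∀ v', v' ∈ reachAvoid E (U ∩ t.move) v → v' ∉ t.move → NWinT E k t.move v'
  | _, _, .step _ _ _ _ _ _ _ h => h

noncomputable def NWinT.depth : ∀ {U : Set V} {v : V}, NWinT E k U v → Ordinal.{u}
  | _, _, .step U v U' _ _ _ _ h =>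
      (⨆ p : {v' : V // v' ∈ reachAvoid E (U ∩ U') v ∧ v' ∉ U'},
        (h p.1 p.2.1 p.2.2).depth) + 1

theorem NWinT.depth_child_lt {U v} (t : NWinT E k U v) (v' : V)
    (h1 : v' ∈ reachAvoid E (U ∩ t.move) v) (h2 : v' ∉ t.move) :
    (t.child v' h1 h2).depth < t.depth := by
  cases t with
  | step U v U' hfin hcard hloc hmon h =>
      have hle : (h v' h1 h2).depth ≤
          ⨆ p : {w : V // w ∈ reachAvoid E (U ∩ U') v ∧ w ∉ U'},
            (h p.1 p.2.1 p.2.2).depth := by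
        exact le_ciSup
          (Ordinal.bddAbove_range
            (fun p : {w : V // w ∈ reachAvoid E (U ∩ U') v ∧ w ∉ U'} =>
              (h p.1 p.2.1 p.2.2).depth)) ⟨v', h1, h2⟩
      calc (h v' h1 h2).depth ≤ _ := hle
        _ < _ + 1 := Order.lt_add_one_iff.mpr le_rfl

theorem NWinT.depth_cast {A B : Set V} {y : V} (hAB : A = B) (tr : NWinT E k A y) :
    (hAB ▸ tr : NWinT E k B y).depth = tr.depth := by subst hAB; rfl

/-- Normalization: a monotone strategy can be pruned to one placing cops only in
the closure of the robber's region. -/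
theorem norm {U : Set V} {v : V} (hw : MonCopsWin E k U v) :
    ∀ D : Set V, reachAvoid E U v ⊆ D → Nonempty (NWinT E k (U ∩ cl E D) v) := by
  induction hw with
  | step U v U' hfin hcard hmon h IH =>
    intro D hD
    set C : Set V := reachAvoid E (U ∩ U') v with hCdef
    have hCsub : C ⊆ reachAvoid E U v := by
      apply reach_closed (reach_refl U v)
      intro a ha b hab hb
      by_cases hbU : b ∈ U
      · exfalso
        have hbU' : b ∉ U' := fun hb' => hb ⟨hbU, hb'⟩
        have haC : a ∈ C := reach_mono Set.inter_subset_left v ha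
        exact hmon b ⟨hbU, hbU'⟩ (reach_step haC hab hb)
      · exact reach_step ha hab hbU
    have hCD : C ⊆ D := hCsub.trans hD
    set P : Set V := U ∩ cl E D with hPdef
    set P' : Set V := U' ∩ cl E C with hP'def
    have hPP' : reachAvoid E (P ∩ P') v = C := by
      apply Set.Subset.antisymm
      · apply reach_closed (reach_refl _ v)
        intro a ha b hab hb
        by_cases hbUU' : b ∈ U ∩ U'
        · exfalso
          have hbcl : b ∈ cl E C := Or.inr ⟨a, ha, Or.inr hab⟩
          exact hb ⟨⟨hbUU'.1, cl_mono hCD hbcl⟩, ⟨hbUU'.2, hbcl⟩⟩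
        · exact reach_step ha hab hbUU'
      · have hsub : P ∩ P' ⊆ U ∩ U' := fun x hx => ⟨hx.1.1, hx.2.1⟩
        exact reach_mono hsub v
    refine ⟨NWinT.step P v P' (hfin.subset Set.inter_subset_left)
      (le_trans (Set.ncard_le_ncard Set.inter_subset_left hfin) hcard) ?_ ?_ ?_⟩
    · rw [hPP']; exact Set.inter_subset_right
    · intro u hu
      rw [hPP']
      rcases hu with ⟨huP, huP'⟩
      by_cases huU' : u ∈ U'
      · intro huC
        exact huP' ⟨huU', subset_cl C huC⟩
      · exact hmon u ⟨huP.1, huU'⟩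
    · intro v' h1 h2
      rw [hPP'] at h1
      have hv'U' : v' ∉ U' := fun hv' => h2 ⟨hv', subset_cl C h1⟩
      have hreach : reachAvoid E U' v' ⊆ C := by
        apply reach_closed h1
        intro a ha b hab hb
        by_cases hbUU' : b ∈ U ∩ U'
        · exact absurd hbUU'.2 hb
        · exact reach_step ha hab hbUU'
      exact (IH v' h1 hv'U' C hreach).some

theorem ncard_biUnion_le {α β : Type*} {S : Set α} (hS : S.Finite) (g : α → Set β) (k : ℕ)
    (hfin : ∀ x ∈ S, (g x).Finite) (hcard : ∀ x ∈ S, (g x).ncard ≤ k) :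
    (⋃ x ∈ S, g x).ncard ≤ S.ncard * k := by
  revert hfin hcard
  refine Set.Finite.induction_on
    (motive := fun S _ => (∀ x ∈ S, (g x).Finite) → (∀ x ∈ S, (g x).ncard ≤ k) →
      (⋃ x ∈ S, g x).ncard ≤ S.ncard * k) S hS (by simp) ?_
  intro a s ha hs IH hfin hcard
  rw [Set.biUnion_insert]
  calc (g a ∪ ⋃ x ∈ s, g x).ncard
      ≤ (g a).ncard + (⋃ x ∈ s, g x).ncard :=
        Set.ncard_union_le _ _
    _ ≤ k + s.ncard * k := by
        gcongr
        · exact hcard a (Set.mem_insert a s)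
        · exact IH (fun x hx => hfin x (Set.mem_insert_of_mem a hx))
            (fun x hx => hcard x (Set.mem_insert_of_mem a hx))
    _ = (s.ncard + 1) * k := by ring
    _ = (insert a s).ncard * k := by rw [Set.ncard_insert_of_notMem ha hs]

/-- Main lemma: if every robber `x ∈ R` carries a normalized strategy tree for `k`
cops from cop-set `W x`, the territories `reachAvoid E (W x) x` avoid the global
cop set `U`, and territories of distinct cop-sets are disjoint-or-shared, then
`r·k` cops monotonically win against the `r` robbers. Induction on the maximal
tree depth. -/
theorem main (hsym : Symmetric E) (r : ℕ) :
    ∀ (μ : Ordinal.{u}) (U R : Set V), R.Finite → R.ncard ≤ r →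
    ∀ (W : V → Set V) (t : ∀ x, x ∈ R → NWinT E k (W x) x),
    (∀ x ∈ R, W x ⊆ U) →
    (∀ x ∈ R, reachAvoid E (W x) x ∩ U = ∅) →
    (∀ x, x ∈ R → ∀ z, z ∈ R →
      W x = W z ∨ reachAvoid E (W x) x ∩ reachAvoid E (W z) z = ∅) →
    (∀ x (hx : x ∈ R), (t x hx).depth < μ) →
    MonCopsWinMulti E (r * k) r U R := by
  intro μ
  induction μ using Ordinal.induction with
  | _ μ IH =>
  intro U R hRfin hRcard W t hWU hterr hcons hd
  classical
  by_cases hRe : R = ∅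
  · subst hRe; exact MonCopsWinMulti.captured U
  obtain ⟨x₀, hx₀⟩ := Set.nonempty_iff_ne_empty.mpr hRe
  haveI : Nonempty V := ⟨x₀⟩
  -- territory of robber x
  set T : V → Set V := fun x => reachAvoid E (W x) x with hTdef
  -- representative of each territory
  set f : Set V → V :=
    fun S => if h : ∃ z, z ∈ R ∧ T z = S then h.choose else Classical.arbitrary V with hf
  set rep : V → V := fun x => f (T x) with hrepdef
  have hrepR : ∀ x ∈ R, rep x ∈ R ∧ T (rep x) = T x := by
    intro x hx
    have h : ∃ z, z ∈ R ∧ T z = T x := ⟨x, hx, rfl⟩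
    simp only [hrepdef, hf, dif_pos h]
    exact h.choose_spec
  have hrep_eq : ∀ x z, T x = T z → rep x = rep z := by
    intro x z h; simp only [hrepdef, h]
  -- cop sets of distinct teams coincide on a territory
  have hWrep : ∀ x (hx : x ∈ R), W (rep x) = W x := by
    intro x hx
    rcases hcons x hx (rep x) (hrepR x hx).1 with hW | hdis
    · exact hW.symm
    · exfalso
      refine Set.eq_empty_iff_forall_notMem.1 hdis x ⟨reach_refl _ _, ?_⟩
      show x ∈ T (rep x)
      rw [(hrepR x hx).2]
      exact reach_refl _ _
  -- the move of the team of robber x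
  set Mv : V → Set V := fun z => if hz : z ∈ R then (t z hz).move else ∅ with hMv
  have hMvrep : ∀ x (hx : x ∈ R), Mv (rep x) = (t (rep x) (hrepR x hx).1).move := by
    intro x hx
    simp only [hMv, dif_pos (hrepR x hx).1]
  set U' : Set V := ⋃ x ∈ R, Mv (rep x) with hU'
  -- rewritten per-robber facts about the team's tree
  have Hmon : ∀ x (hx : x ∈ R),
      ∀ u ∈ W x \ Mv (rep x), u ∉ reachAvoid E (W x ∩ Mv (rep x)) (rep x) := by
    intro x hx
    have h1 := (t (rep x) (hrepR x hx).1).mon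
    rw [← hMvrep x hx, hWrep x hx] at h1
    exact h1
  have Hloc : ∀ x (hx : x ∈ R),
      Mv (rep x) ⊆ cl E (reachAvoid E (W x ∩ Mv (rep x)) (rep x)) := by
    intro x hx
    have h1 := (t (rep x) (hrepR x hx).1).loc
    rw [← hMvrep x hx, hWrep x hx] at h1
    exact h1
  -- KA: the team's intermediate region equals the territory
  have KA : ∀ x (hx : x ∈ R), reachAvoid E (W x ∩ Mv (rep x)) (rep x) = T x := by
    intro x hx
    have hTsub : T x ⊆ reachAvoid E (W x ∩ Mv (rep x)) (rep x) := by
      have e1 : T x = reachAvoid E (W x) (rep x) := by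
        rw [← (hrepR x hx).2, hTdef]
        simp only
        rw [hWrep x hx]
      rw [e1]
      exact reach_mono Set.inter_subset_left _
    apply Set.Subset.antisymm
    · apply reach_closed (show rep x ∈ T x by
        rw [← (hrepR x hx).2]; exact reach_refl _ _)
      intro a ha b hab hb
      by_cases hbW : b ∈ W x
      · exfalso
        have hbM : b ∉ Mv (rep x) := fun h => hb ⟨hbW, h⟩
        exact Hmon x hx b ⟨hbW, hbM⟩ (reach_step (hTsub ha) hab hb)
      · exact reach_step ha hab hbW
    · exact hTsub
  -- KB: global moves keep each robber inside its territory
  have KB : ∀ x (hx : x ∈ R), reachAvoid E (U ∩ U') x ⊆ T x := by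
    intro x hx
    apply reach_closed (reach_refl (W x) x)
    intro a ha b hab hb
    by_cases hbW : b ∈ W x
    · exfalso
      have hbU : b ∈ U := hWU x hx hbW
      have hbU' : b ∉ U' := fun h => hb ⟨hbU, h⟩
      have hbM : b ∉ Mv (rep x) := fun h => hbU' (Set.mem_biUnion hx h)
      have haC : a ∈ reachAvoid E (W x ∩ Mv (rep x)) (rep x) := by
        rw [KA x hx]; exact ha
      exact Hmon x hx b ⟨hbW, hbM⟩ (reach_step haC hab (fun h => hbM h.2))
    · exact reach_step ha hab hbW
  -- disjointness of distinct territories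
  have Hdisj : ∀ x (hx : x ∈ R), ∀ z (hz : z ∈ R), rep x ≠ rep z → T x ∩ T z = ∅ := by
    intro x hx z hz hne
    rcases hcons x hx z hz with hW | hdis
    · by_contra hne'
      obtain ⟨w, hw1, hw2⟩ := Set.nonempty_iff_ne_empty.mpr hne'
      have hxX : x ∉ W x := fun h =>
        Set.eq_empty_iff_forall_notMem.1 (hterr x hx) x ⟨reach_refl _ _, hWU x hx h⟩
      have hzX : z ∉ W z := fun h =>
        Set.eq_empty_iff_forall_notMem.1 (hterr z hz) z ⟨reach_refl _ _, hWU z hz h⟩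
      have hzX' : z ∉ W x := by rw [hW]; exact hzX
      have hw2' : w ∈ reachAvoid E (W x) z := by
        have : w ∈ T z := hw2
        rw [hTdef] at this; simp only at this
        rw [← hW] at this
        exact this
      have hTeq : T x = T z := by
        have := reach_eq_of_mem hsym hxX hzX' hw1 hw2'
        rw [hTdef]; simp only
        rw [this, hW]
      exact hne (hrep_eq x z hTeq)
    · exact hdis
  -- finiteness and cardinality of the global move
  have hMvfin : ∀ x ∈ R, (Mv (rep x)).Finite := by
    intro x hx
    rw [hMvrep x hx]
    exact (t (rep x) (hrepR x hx).1).move_fin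
  have hfinU' : U'.Finite := hRfin.biUnion hMvfin
  have hcardU' : U'.ncard ≤ r * k := by
    calc U'.ncard ≤ R.ncard * k := ncard_biUnion_le hRfin _ k hMvfin
          (fun x hx => by rw [hMvrep x hx]; exact (t (rep x) (hrepR x hx).1).move_card)
      _ ≤ r * k := Nat.mul_le_mul_right k hRcard
  -- global monotonicity
  have hmonU' : ∀ u ∈ U \ U', ∀ x ∈ R, u ∉ reachAvoid E (U ∩ U') x := by
    intro u hu x hx hreach
    exact Set.eq_empty_iff_forall_notMem.1 (hterr x hx) u ⟨KB x hx hreach, hu.1⟩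
  -- depth bound for the recursion
  set D : Ordinal.{u} :=
    hRfin.toFinset.attach.sup (fun p => (t p.1 (hRfin.mem_toFinset.1 p.2)).depth) with hDdef
  have hDle : ∀ z (hz : z ∈ R), (t z hz).depth ≤ D := by
    intro z hz
    exact Finset.le_sup (f := fun p => (t p.1 (hRfin.mem_toFinset.1 p.2)).depth)
      (Finset.mem_attach _ ⟨z, hRfin.mem_toFinset.2 hz⟩)
  have hDlt : D < μ := by
    rw [hDdef, Finset.sup_lt_iff]
    · intro p _
      exact hd p.1 (hRfin.mem_toFinset.1 p.2)
    · calc (⊥ : Ordinal.{u}) = 0 := rfl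
        _ ≤ (t x₀ hx₀).depth := zero_le
        _ < μ := hd x₀ hx₀
  -- existence of child trees with depth bound
  have HC : ∀ x (hx : x ∈ R) y,
      y ∈ reachAvoid E (W x ∩ Mv (rep x)) (rep x) → y ∉ Mv (rep x) →
      ∃ c : NWinT E k (Mv (rep x)) y, c.depth < D := by
    intro x hx y h1 h2
    have hMx := hMvrep x hx
    rw [hMx] at h2
    rw [hMx, ← hWrep x hx] at h1
    refine ⟨hMx.symm ▸ ((t (rep x) (hrepR x hx).1).child y h1 h2), ?_⟩
    rw [NWinT.depth_cast]
    exact lt_of_lt_of_le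
      (NWinT.depth_child_lt (t (rep x) (hrepR x hx).1) y h1 h2)
      (hDle (rep x) (hrepR x hx).1)
  -- the cop move
  refine MonCopsWinMulti.step U R U' hfinU' hcardU' hmonU' ?_
  intro R' hR'fin hR'card hR'U' hheir
  -- heir assignment
  set xf : ∀ y, y ∈ R' → V := fun y hy => (hheir y hy).choose with hxfdef
  have hxf : ∀ y (hy : y ∈ R'), xf y hy ∈ R ∧ y ∈ reachAvoid E (U ∩ U') (xf y hy) :=
    fun y hy => (hheir y hy).choose_spec
  set W' : V → Set V := fun y => if hy : y ∈ R' then Mv (rep (xf y hy)) else ∅ with hW'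
  have hW'eq : ∀ y (hy : y ∈ R'), W' y = Mv (rep (xf y hy)) := by
    intro y hy; simp only [hW', dif_pos hy]
  have hynU' : ∀ y ∈ R', y ∉ U' := by
    intro y hy h
    exact Set.eq_empty_iff_forall_notMem.1 hR'U' y ⟨hy, h⟩
  -- per-heir facts
  have hyT : ∀ y (hy : y ∈ R'), y ∈ T (xf y hy) :=
    fun y hy => KB _ (hxf y hy).1 (hxf y hy).2
  have hyC : ∀ y (hy : y ∈ R'),
      y ∈ reachAvoid E (W (xf y hy) ∩ Mv (rep (xf y hy))) (rep (xf y hy)) := by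
    intro y hy; rw [KA _ (hxf y hy).1]; exact hyT y hy
  have hyM : ∀ y (hy : y ∈ R'), y ∉ Mv (rep (xf y hy)) :=
    fun y hy h => hynU' y hy (Set.mem_biUnion (hxf y hy).1 h)
  -- heir territory is inside the parent territory
  have hsubT : ∀ y (hy : y ∈ R'), reachAvoid E (W' y) y ⊆ T (xf y hy) := by
    intro y hy
    rw [hW'eq y hy]
    calc reachAvoid E (Mv (rep (xf y hy))) y
        ⊆ reachAvoid E (W (xf y hy) ∩ Mv (rep (xf y hy))) y :=
          reach_mono Set.inter_subset_right y
      _ ⊆ reachAvoid E (W (xf y hy) ∩ Mv (rep (xf y hy))) (rep (xf y hy)) :=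
          reach_trans (hyC y hy)
      _ = T (xf y hy) := KA _ (hxf y hy).1
  -- new trees
  have hT' : ∀ y (hy : y ∈ R'), ∃ c : NWinT E k (W' y) y, c.depth < D := by
    intro y hy
    obtain ⟨c, hc⟩ := HC (xf y hy) (hxf y hy).1 y (hyC y hy) (hyM y hy)
    refine ⟨(hW'eq y hy).symm ▸ c, ?_⟩
    rw [NWinT.depth_cast]
    exact hc
  -- invariants at the new position
  have hWU' : ∀ y ∈ R', W' y ⊆ U' := by
    intro y hy
    rw [hW'eq y hy]
    exact Set.subset_biUnion_of_mem (u := fun x => Mv (rep x)) (hxf y hy).1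
  have hterr' : ∀ y ∈ R', reachAvoid E (W' y) y ∩ U' = ∅ := by
    intro y hy
    apply Set.eq_empty_iff_forall_notMem.2
    rintro u ⟨hu1, hu2⟩
    obtain ⟨z, hz, hu2'⟩ := Set.mem_iUnion₂.1 hu2
    have huT : u ∈ T (xf y hy) := hsubT y hy hu1
    by_cases hrr : rep z = rep (xf y hy)
    · rw [hrr] at hu2'
      have : u ∉ Mv (rep (xf y hy)) := by
        rw [hW'eq y hy] at hu1
        exact reach_avoid (hyM y hy) hu1
      exact this hu2'
    · have hdis : T z ∩ T (xf y hy) = ∅ := Hdisj z hz _ (hxf y hy).1 hrr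
      have hunU : u ∉ U := fun h =>
        Set.eq_empty_iff_forall_notMem.1 (hterr _ (hxf y hy).1) u ⟨huT, h⟩
      have hucl : u ∈ cl E (T z) := by
        have h1 := Hloc z hz hu2'
        rw [KA z hz] at h1
        exact h1
      have huTz : u ∈ T z := by
        rcases hucl with h | ⟨w, hwz, hew⟩
        · exact h
        · have hunW : u ∉ W z := fun h => hunU (hWU z hz h)
          rcases hew with h | h
          · exact reach_step hwz (hsym h) hunW
          · exact reach_step hwz h hunW
      exact Set.eq_empty_iff_forall_notMem.1 hdis u ⟨huTz, huT⟩
  have hcons' : ∀ y1, y1 ∈ R' → ∀ y2, y2 ∈ R' →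
      W' y1 = W' y2 ∨ reachAvoid E (W' y1) y1 ∩ reachAvoid E (W' y2) y2 = ∅ := by
    intro y1 hy1 y2 hy2
    by_cases hrr : rep (xf y1 hy1) = rep (xf y2 hy2)
    · left; rw [hW'eq y1 hy1, hW'eq y2 hy2, hrr]
    · right
      have hdis := Hdisj _ (hxf y1 hy1).1 _ (hxf y2 hy2).1 hrr
      apply Set.eq_empty_iff_forall_notMem.2
      rintro u ⟨h1, h2⟩
      exact Set.eq_empty_iff_forall_notMem.1 hdis u ⟨hsubT y1 hy1 h1, hsubT y2 hy2 h2⟩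
  exact IH D hDlt U' R' hR'fin hR'card W' (fun y hy => (hT' y hy).choose)
    hWU' hterr' hcons' (fun y hy => (hT' y hy).choose_spec)

end MultiRobberAux

/-- **Lemma `lemma_Rtreewidth`:** on an undirected graph `G` with
`tw(G) + 1 ≤ k` (i.e. `k` cops monotonically capture one visible robber),
for every `r ≥ 1` the `r·k` cops monotonically capture `r` robbers;
i.e. `tw_r(G) + 1 ≤ r · (tw(G) + 1)`. -/
theorem treewidth_multi_robbers {V : Type*} (E : V → V → Prop) (hsym : Symmetric E)
    (k : ℕ) (hwin : ∀ v : V, MonCopsWin E k ∅ v) (r : ℕ) (hr : 1 ≤ r) :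
    ∀ R : Set V, R.Finite → R.ncard ≤ r → MonCopsWinMulti E (r * k) r ∅ R := by
  classical
  intro R hfin hcard
  have t : ∀ x, x ∈ R → MultiRobberAux.NWinT E k (∅ : Set V) x := fun x hx =>
    (Set.empty_inter (MultiRobberAux.cl E (reachAvoid E ∅ x))) ▸
      (MultiRobberAux.norm (hwin x) (reachAvoid E ∅ x) subset_rfl).some
  set D : Ordinal :=
    hfin.toFinset.attach.sup (fun p => (t p.1 (hfin.mem_toFinset.1 p.2)).depth) with hD
  refine MultiRobberAux.main hsym r (D + 1) ∅ R hfin hcard (fun _ => ∅) t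
    (fun x hx => subset_rfl) (fun x hx => Set.inter_empty _)
    (fun x hx z hz => Or.inl rfl) ?_
  intro x hx
  have hle : (t x hx).depth ≤ D :=
    Finset.le_sup (f := fun p => (t p.1 (hfin.mem_toFinset.1 p.2)).depth)
      (Finset.mem_attach _ ⟨x, hfin.mem_toFinset.2 hx⟩)
  exact lt_of_le_of_lt hle (Order.lt_add_one_iff.mpr le_rfl)
end

section
/- For every directed graph G on n vertices, the sequence dw_r(G) of cop numbers against r robbers is monotonically non-decreasing in r, with dw_1(G) equal to the DAG-width of G and dw_n(G) equal to the directed path-width of G plus 1. -/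
/-- `dw_r(G)`: the minimal number of cops that monotonically capture `r` robbers. -/
noncomputable def dwr {V : Type*} (E : V → V → Prop) (r : ℕ) : ℕ :=
  sInf {k | ∀ R : Set V, R.Finite → R.ncard ≤ r → MonCopsWinMulti E k r ∅ R}

/-- The DAG-width of `G`: the minimal number of cops that monotonically capture
one visible robber. -/
noncomputable def dagWidth {V : Type*} (E : V → V → Prop) : ℕ :=
  sInf {k | ∀ v : V, MonCopsWin E k ∅ v}

/-- The directed path-width of `G` plus one: the minimal number of cops that
monotonically clear `G` against an invisible robber. -/
noncomputable def dpwPlusOne {V : Type*} (E : V → V → Prop) : ℕ :=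
  sInf {k | InvClear E k ∅ Set.univ}


section Aux

variable {V : Type*} (E : V → V → Prop)

lemma multi_mono_robbers {k r r' : ℕ} (hrr : r ≤ r') {U R : Set V}
    (h : MonCopsWinMulti E k r' U R) : MonCopsWinMulti E k r U R := by
  induction h with
  | captured U => exact .captured U
  | step U R U' hfin hcard hmon h ih =>
    exact .step U R U' hfin hcard hmon
      (fun R' hf hc hi hr => ih R' hf (hc.trans hrr) hi hr)

lemma multi_mono_subset {k r : ℕ} {U R : Set V}
    (h : MonCopsWinMulti E k r U R) : ∀ R'' ⊆ R, MonCopsWinMulti E k r U R'' := by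
  induction h with
  | captured U =>
    intro R'' hsub
    rw [Set.subset_empty_iff.mp hsub]; exact .captured U
  | step U R U' hfin hcard hmon h ih =>
    intro R'' hsub
    refine .step U R'' U' hfin hcard (fun u hu x hx => hmon u hu x (hsub hx)) ?_
    intro R' hf hc hi hr
    exact h R' hf hc hi (fun y hy => (hr y hy).imp (fun x hx => ⟨hsub hx.1, hx.2⟩))

lemma multi_top [Fintype V] (k r : ℕ) (hk : Fintype.card V ≤ k) (U R : Set V) :
    MonCopsWinMulti E k r U R := by
  refine .step U R Set.univ Set.finite_univ
    (by simpa [Set.ncard_univ, Nat.card_eq_fintype_card] using hk) ?_ ?_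
  · intro u hu; simp at hu
  · intro R' _ _ hi _
    have hR' : R' = ∅ := by simpa using hi
    rw [hR']; exact .captured _

lemma single_to_multi {k : ℕ} {U : Set V} {v : V}
    (h : MonCopsWin E k U v) : MonCopsWinMulti E k 1 U {v} := by
  induction h with
  | step U v U' hfin hcard hmon h ih =>
    refine .step U {v} U' hfin hcard ?_ ?_
    · intro u hu x hx
      rw [Set.mem_singleton_iff] at hx; subst hx
      exact hmon u hu
    · intro R' hf hc hi hr
      rcases R'.eq_empty_or_nonempty with rfl | hne
      · exact .captured _
      · have h1 : R'.ncard = 1 := le_antisymm hc ((Set.ncard_pos hf).mpr hne)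
        obtain ⟨y, rfl⟩ := Set.ncard_eq_one.mp h1
        obtain ⟨x, hx, hreach⟩ := hr y rfl
        rw [Set.mem_singleton_iff] at hx; subst hx
        have hyU' : y ∉ U' := fun hy =>
          Set.eq_empty_iff_forall_notMem.mp hi y ⟨rfl, hy⟩
        exact ih y hreach hyU'

lemma multi_to_single {k : ℕ} {U R : Set V}
    (h : MonCopsWinMulti E k 1 U R) : ∀ v ∈ R, MonCopsWin E k U v := by
  induction h with
  | captured U => intro v hv; exact absurd hv (Set.notMem_empty v)
  | step U R U' hfin hcard hmon h ih =>
    intro v hv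
    refine .step U v U' hfin hcard (fun u hu => hmon u hu v hv) ?_
    intro v' hv' hnot
    refine ih {v'} (Set.finite_singleton v') (by simp) ?_ ?_ v' rfl
    · ext y
      simp only [Set.mem_inter_iff, Set.mem_singleton_iff, Set.mem_empty_iff_false,
        iff_false, not_and]
      rintro rfl; exact hnot
    · intro y hy
      rw [Set.mem_singleton_iff] at hy; subst hy
      exact ⟨v, hv, hv'⟩

lemma inv_to_multi [Fintype V] {k : ℕ} {U R : Set V}
    (h : InvClear E k U R) : R ∩ U = ∅ → MonCopsWinMulti E k (Fintype.card V) U R := by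
  induction h with
  | empty U => intro _; exact .captured U
  | step U R U' hfin hcard hmon hclear ih =>
    intro hRU
    refine .step U R U' hfin hcard ?_ ?_
    · intro u hu x hx hreach
      have huR : u ∈ R := hmon ⟨⟨x, hx, hreach⟩, hu.2⟩
      exact Set.eq_empty_iff_forall_notMem.mp hRU u ⟨huR, hu.1⟩
    · intro R' hf hc hi hr
      have hwin := ih (by ext y; simp)
      refine multi_mono_subset E hwin R' ?_
      intro y hy
      exact ⟨hr y hy, fun hyU' => Set.eq_empty_iff_forall_notMem.mp hi y ⟨hy, hyU'⟩⟩

lemma multi_to_inv [Fintype V] {k : ℕ} {U R : Set V}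
    (h : MonCopsWinMulti E k (Fintype.card V) U R) :
    (∀ a ∈ R, ∀ b, E a b → b ∈ R ∪ U) → InvClear E k U R := by
  induction h with
  | captured U => intro _; exact .empty U
  | step U R U' hfin hcard hmon h ih =>
    intro hclosed
    have hS_sub : {w | ∃ x ∈ R, w ∈ reachAvoid E (U ∩ U') x} ⊆ R := by
      rintro w ⟨x, hx, hreach⟩
      induction hreach with
      | refl => exact hx
      | @tail b c hab hbc ihp =>
        rcases hclosed b ihp c hbc.1 with hcR | hcU
        · exact hcR
        · have hcU' : c ∉ U' := fun hc' => hbc.2 ⟨hcU, hc'⟩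
          exact absurd (Relation.ReflTransGen.tail hab hbc)
            (hmon c ⟨hcU, hcU'⟩ x hx)
    set S : Set V := {w | ∃ x ∈ R, w ∈ reachAvoid E (U ∩ U') x} with hSdef
    refine InvClear.step U R U' hfin hcard (fun w hw => hS_sub hw.1) ?_
    refine ih (S \ U') (Set.toFinite _)
      (le_trans (Set.ncard_le_ncard (Set.subset_univ _) Set.finite_univ)
        (le_of_eq (by rw [Set.ncard_univ, Nat.card_eq_fintype_card])))
      (by ext y; simp) (fun y hy => hy.1) ?_
    intro a ha b hEab
    by_cases hbU' : b ∈ U'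
    · exact Or.inr hbU'
    · obtain ⟨x, hx, hreach⟩ := ha.1
      have : b ∈ S := ⟨x, hx, Relation.ReflTransGen.tail hreach
        ⟨hEab, fun hb => hbU' hb.2⟩⟩
      exact Or.inl ⟨this, hbU'⟩

end Aux

/-- **The robbers hierarchy:** for a directed graph `G` on `n` vertices, the cop
numbers `dw_r(G)` are monotonically non-decreasing in `r`, with `dw_1(G)` equal
to the DAG-width of `G` and `dw_n(G)` equal to the directed path-width of `G`
plus `1`. -/
theorem dwr_hierarchy {V : Type*} [Fintype V] (E : V → V → Prop) :
    (∀ r r' : ℕ, r ≤ r' → dwr E r ≤ dwr E r') ∧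
    dwr E 1 = dagWidth E ∧
    dwr E (Fintype.card V) = dpwPlusOne E := by
  refine ⟨?_, ?_, ?_⟩
  · intro r r' hrr
    have hne : {k | ∀ R : Set V, R.Finite → R.ncard ≤ r' →
        MonCopsWinMulti E k r' ∅ R}.Nonempty :=
      ⟨Fintype.card V, fun R _ _ => multi_top E _ r' le_rfl ∅ R⟩
    have hmem := Nat.sInf_mem hne
    exact Nat.sInf_le (fun R hf hc =>
      multi_mono_robbers E hrr (hmem R hf (hc.trans hrr)))
  · unfold dwr dagWidth
    congr 1
    ext k
    simp only [Set.mem_setOf_eq]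
    constructor
    · intro hk v
      exact multi_to_single E (hk {v} (Set.finite_singleton v) (by simp)) v rfl
    · intro hk R hf hc
      rcases R.eq_empty_or_nonempty with rfl | hne
      · exact .captured ∅
      · have h1 : R.ncard = 1 := le_antisymm hc ((Set.ncard_pos hf).mpr hne)
        obtain ⟨v, rfl⟩ := Set.ncard_eq_one.mp h1
        exact single_to_multi E (hk v)
  · unfold dwr dpwPlusOne
    congr 1
    ext k
    simp only [Set.mem_setOf_eq]
    constructor
    · intro hk
      exact multi_to_inv E
        (hk Set.univ Set.finite_univ
          (le_of_eq (by rw [Set.ncard_univ, Nat.card_eq_fintype_card])))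
        (by simp)
    · intro hk R hf hc
      have hwin := inv_to_multi E hk (by simp)
      exact multi_mono_subset E hwin R (Set.subset_univ R)
end

section
/- On the full undirected tree of branching degree d ≥ 3 and sufficient height, i robbers who can jump to each other win the multiple-robbers game against ⌊i/2⌋ cops, provided the cops play top-down (never leaving a vertex v unoccupied while placing cops in the subtree below v when v is reachable from a robber): the robbers can maintain that every placed cop is tied, i.e., reachable from some robber by a cop-free path. -/
/-- Vertices of the complete tree of branching degree `d` and height `h + 1`:
sequences over `Fin d` of length at most `h` (the root is the empty sequence). -/
def TreeV (d h : ℕ) := {l : List (Fin d) // l.length ≤ h}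

/-- The (undirected) edge relation of the complete tree: parent–child edges in
both directions. -/
def treeE (d h : ℕ) : TreeV d h → TreeV d h → Prop :=
  fun x y => (∃ i : Fin d, y.1 = x.1 ++ [i]) ∨ (∃ i : Fin d, x.1 = y.1 ++ [i])

/-- `v` is a proper ancestor of `u` in the tree. -/
def ProperAncestor {d h : ℕ} (v u : TreeV d h) : Prop :=
  v.1 <+: u.1 ∧ v.1 ≠ u.1

/-- Monotone win of `k` cops against (at most) `r` jumping robbers on the tree,
where the cops are moreover required to play *top-down*: they never leave a
vertex `v` unoccupied while placing a new cop in the subtree below `v` when `v`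
is reachable from a robber. -/
inductive TopDownCopsWin (d h : ℕ) (k r : ℕ) :
    Set (TreeV d h) → Set (TreeV d h) → Prop
  | captured (U : Set (TreeV d h)) : TopDownCopsWin d h k r U ∅
  | step (U R U' : Set (TreeV d h)) (hfin : U'.Finite) (hcard : U'.ncard ≤ k)
      (hmon : ∀ u ∈ U \ U', ∀ x ∈ R, u ∉ reachAvoid (treeE d h) (U ∩ U') x)
      (htopdown : ∀ v, v ∉ U' → (∃ u ∈ U' \ U, ProperAncestor v u) →
          ∀ x ∈ R, v ∉ reachAvoid (treeE d h) (U ∩ U') x)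
      (hrec : ∀ R' : Set (TreeV d h), R'.Finite → R'.ncard ≤ r → R' ∩ U' = ∅ →
            (∀ y ∈ R', ∃ x ∈ R, y ∈ reachAvoid (treeE d h) (U ∩ U') x) →
            TopDownCopsWin d h k r U' R') :
      TopDownCopsWin d h k r U R

namespace RBT

variable {d h : ℕ}

instance : DecidableEq (TreeV d h) :=
  inferInstanceAs (DecidableEq {l : List (Fin d) // l.length ≤ h})

lemma TreeV.ext {x y : TreeV d h} (hxy : x.1 = y.1) : x = y := Subtype.ext hxy

/-- the whole subtree below `x` (including `x`) avoids `U` -/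
def Free (U : Set (TreeV d h)) (x : TreeV d h) : Prop :=
  ∀ y : TreeV d h, x.1 <+: y.1 → y ∉ U

lemma Free.not_mem {U : Set (TreeV d h)} {x : TreeV d h} (hf : Free U x) : x ∉ U :=
  hf x (List.prefix_refl _)

/-- the parent of `x` is in `U` -/
def HasPar (U : Set (TreeV d h)) (x : TreeV d h) : Prop :=
  ∃ p ∈ U, ∃ j : Fin d, x.1 = p.1 ++ [j]

def rootV (d h : ℕ) : TreeV d h := ⟨[], Nat.zero_le h⟩

def Inv (k : ℕ) (U R : Set (TreeV d h)) : Prop :=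
  (U = ∅ ∧ R = {rootV d h}) ∨
  (U.Finite ∧ U.ncard ≤ k ∧ ∃ S : Finset (TreeV d h), R = ↑S ∧ S.Nonempty ∧
    (∀ x ∈ S, Free U x ∧ HasPar U x ∧ x.1.length ≤ (k+1)*(S.card - 1) + 1) ∧
    (∀ x ∈ S, (S.filter (fun z => z.1.dropLast = x.1.dropLast)).card ≤ 2))

lemma reach_down (X : Set (TreeV d h)) (x : TreeV d h)
    (hfree : ∀ y : TreeV d h, x.1 <+: y.1 → y ∉ X) :
    ∀ w : TreeV d h, x.1 <+: w.1 → w ∈ reachAvoid (treeE d h) X x := by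
  intro w hw
  obtain ⟨t, ht⟩ := hw
  induction t using List.reverseRecOn generalizing w with
  | nil =>
    have : w = x := TreeV.ext (by rw [← ht, List.append_nil])
    subst this
    exact Relation.ReflTransGen.refl
  | append_singleton t j ih =>
    have hlen : (x.1 ++ t).length ≤ h := by
      have hw2 := w.2
      rw [← ht] at hw2
      simp only [List.length_append, List.length_singleton] at hw2 ⊢
      omega
    have hw' : (⟨x.1 ++ t, hlen⟩ : TreeV d h) ∈ reachAvoid (treeE d h) X x := ih _ rfl
    refine Relation.ReflTransGen.tail hw' ⟨Or.inl ⟨j, ?_⟩, hfree w ⟨t ++ [j], ht⟩⟩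
    show w.1 = (x.1 ++ t) ++ [j]
    rw [← ht, List.append_assoc]

lemma reach_parent (X : Set (TreeV d h)) (p x : TreeV d h) (j : Fin d)
    (hx : x.1 = p.1 ++ [j]) (hp : p ∉ X) : p ∈ reachAvoid (treeE d h) X x :=
  Relation.ReflTransGen.single ⟨Or.inr ⟨j, hx⟩, hp⟩

lemma prefix_comparable {l₁ l₂ l₃ : List (Fin d)} (h1 : l₁ <+: l₃) (h2 : l₂ <+: l₃) :
    l₁ <+: l₂ ∨ l₂ <+: l₁ := by
  rcases le_total l₁.length l₂.length with hle | hle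
  · exact Or.inl (List.prefix_of_prefix_length_le h1 h2 hle)
  · exact Or.inr (List.prefix_of_prefix_length_le h2 h1 hle)

lemma invade {k : ℕ} {U U' R : Set (TreeV d h)} (hfin : U'.Finite) (hcard : U'.ncard ≤ k)
    (htopdown : ∀ v, v ∉ U' → (∃ u ∈ U' \ U, ProperAncestor v u) →
      ∀ x ∈ R, v ∉ reachAvoid (treeE d h) (U ∩ U') x)
    {x : TreeV d h} (hxR : x ∈ R) (hfree : Free U x)
    (hinv : ∃ t ∈ U', x.1 <+: t.1) :
    ∃ s : TreeV d h, s ∈ U' ∧ x.1 <+: s.1 ∧ s.1.length ≤ x.1.length + k ∧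
      ∀ z : TreeV d h, s.1 <+: z.1 → z.1 ≠ s.1 → z ∉ U' := by
  classical
  set T : Finset (TreeV d h) := hfin.toFinset.filter (fun t => x.1 <+: t.1) with hT
  have hTne : T.Nonempty := by
    obtain ⟨t, htU', hxt⟩ := hinv
    exact ⟨t, Finset.mem_filter.2 ⟨hfin.mem_toFinset.2 htU', hxt⟩⟩
  obtain ⟨s, hsT, hsmax⟩ := Finset.exists_max_image T (fun t => t.1.length) hTne
  have hsU' : s ∈ U' := hfin.mem_toFinset.1 (Finset.mem_filter.1 hsT).1
  have hxs : x.1 <+: s.1 := (Finset.mem_filter.1 hsT).2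
  have hmaxp : ∀ z : TreeV d h, s.1 <+: z.1 → z.1 ≠ s.1 → z ∉ U' := by
    intro z h1 h2 hzU'
    have hzT : z ∈ T := Finset.mem_filter.2 ⟨hfin.mem_toFinset.2 hzU', hxs.trans h1⟩
    exact h2 (h1.eq_of_length (le_antisymm h1.length_le (hsmax z hzT))).symm
  refine ⟨s, hsU', hxs, ?_, hmaxp⟩
  -- closure: every vertex strictly between x and s is in U'
  have hclo : ∀ v : TreeV d h, x.1 <+: v.1 → v.1 <+: s.1 → v.1 ≠ s.1 → v ∈ U' := by
    intro v hv1 hv2 hv3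
    by_contra hvU'
    refine htopdown v hvU' ⟨s, ⟨hsU', fun hsU => hfree s hxs hsU⟩, hv2, hv3⟩ x hxR ?_
    exact reach_down (U ∩ U') x (fun y hy hyX => hfree y hy hyX.1) v hv1
  -- depth bound via injection of Ioc into U'
  have hstep : ∀ m ∈ Finset.Ioc x.1.length s.1.length,
      (⟨s.1.take m, le_trans (by simpa using Nat.min_le_right m s.1.length) s.2⟩ : TreeV d h) ∈ hfin.toFinset := by
    intro m hm
    obtain ⟨hm1, hm2⟩ := Finset.mem_Ioc.1 hm
    rcases eq_or_lt_of_le hm2 with heq | hlt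
    · have heq2 : (⟨s.1.take m, le_trans (by simp) s.2⟩ : TreeV d h) = s :=
        TreeV.ext (by rw [heq]; exact List.take_of_length_le le_rfl)
      exact hfin.mem_toFinset.2 (by rw [heq2]; exact hsU')
    · apply hfin.mem_toFinset.2
      apply hclo
      · exact List.prefix_of_prefix_length_le hxs (List.take_prefix m s.1)
          (by rw [List.length_take]; omega)
      · exact List.take_prefix m s.1
      · intro hc
        have := congrArg List.length hc
        rw [List.length_take] at this
        omega
  have hinj : Set.InjOn (fun m => (⟨s.1.take m, le_trans (by simpa using Nat.min_le_right m s.1.length) s.2⟩ : TreeV d h)) ↑(Finset.Ioc x.1.length s.1.length) := by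
    intro a ha b hb hab
    simp only [Finset.coe_Ioc, Set.mem_Ioc] at ha hb
    have := congrArg (fun z : TreeV d h => z.1.length) hab
    simp only [List.length_take] at this
    omega
  have hcard2 := Finset.card_le_card_of_injOn _ hstep hinj
  rw [Nat.card_Ioc] at hcard2
  have hcc : hfin.toFinset.card ≤ k := by
    rw [← Set.ncard_eq_toFinset_card U' hfin]; exact hcard
  omega
lemma card_le_two_mul {S : Finset (TreeV d h)} {W : Set (TreeV d h)} (hW : W.Finite)
    (hpar : ∀ z ∈ S, ∃ p ∈ W, ∃ j : Fin d, z.1 = p.1 ++ [j])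
    (hfib : ∀ x ∈ S, (S.filter (fun z => z.1.dropLast = x.1.dropLast)).card ≤ 2) :
    S.card ≤ 2 * W.ncard := by
  classical
  have h1 : S.card ≤ 2 * (S.image (fun z : TreeV d h => z.1.dropLast)).card := by
    apply Finset.card_le_mul_card_image
    intro b hb
    obtain ⟨x, hxS, hfx⟩ := Finset.mem_image.1 hb
    subst hfx
    exact hfib x hxS
  have h2 : (S.image (fun z : TreeV d h => z.1.dropLast)) ⊆
      hW.toFinset.image (fun p : TreeV d h => p.1) := by
    intro b hb
    obtain ⟨x, hxS, hfx⟩ := Finset.mem_image.1 hb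
    obtain ⟨p, hpW, j, hzp⟩ := hpar x hxS
    exact Finset.mem_image.2 ⟨p, hW.mem_toFinset.2 hpW, by rw [← hfx, hzp, List.dropLast_concat]⟩
  have h3 : (hW.toFinset.image (fun p : TreeV d h => p.1)).card ≤ W.ncard := by
    rw [Set.ncard_eq_toFinset_card W hW]
    exact Finset.card_image_le
  have := le_trans (Finset.card_le_card h2) h3
  omega

structure SpawnP (k : ℕ) (U U' : Set (TreeV d h)) (x y₁ y₂ : TreeV d h) : Prop where
  ne : y₁ ≠ y₂
  dl : y₁.1.dropLast = y₂.1.dropLast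
  free1 : Free U' y₁
  free2 : Free U' y₂
  par1 : HasPar U' y₁
  par2 : HasPar U' y₂
  len1 : y₁.1.length ≤ x.1.length + k + 1
  len2 : y₂.1.length ≤ x.1.length + k + 1
  lt1 : x.1.length < y₁.1.length
  lt2 : x.1.length < y₂.1.length
  pre1 : x.1 <+: y₁.1
  pre2 : x.1 <+: y₂.1
  sib : ∀ l : List (Fin d), l ≠ [] → l.dropLast = y₁.1.dropLast → x.1 <+: l
  reach1 : y₁ ∈ reachAvoid (treeE d h) (U ∩ U') x
  reach2 : y₂ ∈ reachAvoid (treeE d h) (U ∩ U') x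

lemma spawn {k : ℕ} {U U' R : Set (TreeV d h)} (hd : 3 ≤ d)
    (hfin : U'.Finite) (hcard : U'.ncard ≤ k)
    (htopdown : ∀ v, v ∉ U' → (∃ u ∈ U' \ U, ProperAncestor v u) →
      ∀ x ∈ R, v ∉ reachAvoid (treeE d h) (U ∩ U') x)
    {x : TreeV d h} (hxR : x ∈ R) (hfree : Free U x)
    (hinv : ∃ t ∈ U', x.1 <+: t.1) (hroom : x.1.length + k + 1 ≤ h) :
    ∃ y₁ y₂ : TreeV d h, SpawnP k U U' x y₁ y₂ := by
  obtain ⟨s, hsU', hxs, hslen, hsmax⟩ := invade hfin hcard htopdown hxR hfree hinv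
  have hylen : ∀ j : Fin d, (s.1 ++ [j]).length ≤ h := by
    intro j
    simp only [List.length_append, List.length_singleton]
    have := hxs.length_le
    omega
  have hd0 : (0 : ℕ) < d := by omega
  have hd1 : (1 : ℕ) < d := by omega
  set y₁ : TreeV d h := ⟨s.1 ++ [⟨0, hd0⟩], hylen _⟩ with hy₁
  set y₂ : TreeV d h := ⟨s.1 ++ [⟨1, hd1⟩], hylen _⟩ with hy₂
  have hdrop1 : y₁.1.dropLast = s.1 := List.dropLast_concat
  have hdrop2 : y₂.1.dropLast = s.1 := List.dropLast_concat
  have hfreeY : ∀ j : Fin d, Free U' (⟨s.1 ++ [j], hylen j⟩ : TreeV d h) := by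
    intro j z hz
    refine hsmax z ((List.prefix_append s.1 [j]).trans hz) ?_
    intro hc
    have h1 := hz.length_le
    rw [hc] at h1
    simp at h1
  have hpre : ∀ j : Fin d, x.1 <+: s.1 ++ [j] :=
    fun j => hxs.trans (List.prefix_append s.1 [j])
  have hxlen : ∀ j : Fin d, x.1.length < (s.1 ++ [j]).length := by
    intro j
    have := hxs.length_le
    simp only [List.length_append, List.length_singleton]
    omega
  have hreach : ∀ j : Fin d, (⟨s.1 ++ [j], hylen j⟩ : TreeV d h) ∈
      reachAvoid (treeE d h) (U ∩ U') x :=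
    fun j => reach_down (U ∩ U') x (fun y hy hyX => hfree y hy hyX.1) _ (hpre j)
  refine ⟨y₁, y₂, ?_, by rw [hdrop1, hdrop2], hfreeY _, hfreeY _,
    ⟨s, hsU', _, rfl⟩, ⟨s, hsU', _, rfl⟩, ?_, ?_, hxlen _, hxlen _, hpre _, hpre _, ?_,
    hreach _, hreach _⟩
  · intro hc
    have := congrArg (fun z : TreeV d h => z.1) hc
    simp only [hy₁, hy₂] at this
    have := List.append_inj_right this rfl
    simp at this
  · simp only [hy₁, List.length_append, List.length_singleton]; omega
  · simp only [hy₂, List.length_append, List.length_singleton]; omega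
  · intro l hl hdl
    rw [hdrop1] at hdl
    have : l.dropLast <+: l := List.dropLast_prefix l
    rw [hdl] at this
    exact hxs.trans this
lemma no_win {k i : ℕ} (hd : 3 ≤ d) (hi : 1 ≤ i) (hki : 2 * k ≤ i)
    (hh : 2 * (k + 1) ^ 2 ≤ h) :
    ∀ U R : Set (TreeV d h), TopDownCopsWin d h k i U R → Inv k U R → False := by
  intro U R W
  induction W with
  | captured U =>
    intro hI
    rcases hI with ⟨-, hR⟩ | ⟨-, -, S, hRS, hSne, -, -⟩
    · exact Set.singleton_ne_empty _ hR.symm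
    · obtain ⟨x, hx⟩ := hSne
      have hx' : x ∈ (↑S : Set (TreeV d h)) := Finset.mem_coe.2 hx
      rw [← hRS] at hx'
      exact hx'
  | step U R U' hfin hcard hmon htopdown hrec ih =>
    intro hI
    classical
    rcases hI with ⟨hU, hR⟩ | ⟨hUfin, hUcard, S, hRS, hSne, hmain, hfib⟩
    · -- root case
      subst hU; subst hR
      by_cases hU' : U' = ∅
      · subst hU'
        refine ih {rootV d h} (Set.finite_singleton _)
          (by rw [Set.ncard_singleton]; exact hi) (Set.inter_empty _) ?_ (Or.inl ⟨rfl, rfl⟩)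
        intro y hy
        exact ⟨rootV d h, Set.mem_singleton _, (Set.eq_of_mem_singleton hy) ▸ Relation.ReflTransGen.refl⟩
      · obtain ⟨t, htU'⟩ := Set.nonempty_iff_ne_empty.2 hU'
        have hk1 : 1 ≤ k := by
          have h0 : 0 < U'.ncard := (Set.ncard_pos hfin).2 ⟨t, htU'⟩
          omega
        have hroom : (rootV d h).1.length + k + 1 ≤ h := by
          show [].length + k + 1 ≤ h
          simp only [List.length_nil]
          nlinarith
        obtain ⟨y₁, y₂, hsp⟩ :=
          spawn (U := ∅) hd hfin hcard htopdown (Set.mem_singleton (rootV d h))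
            (fun y _ hy => hy) ⟨t, htU', List.nil_prefix⟩ hroom
        have hc2 : ({y₁, y₂} : Finset (TreeV d h)).card = 2 := by
          rw [Finset.card_insert_of_notMem (Finset.notMem_singleton.2 hsp.ne),
            Finset.card_singleton]
        refine ih ↑({y₁, y₂} : Finset (TreeV d h)) (Finset.finite_toSet _) ?_ ?_ ?_ ?_
        · rw [Set.ncard_coe_finset, hc2]; omega
        · apply Set.eq_empty_iff_forall_notMem.2
          intro z hz
          obtain ⟨hz1, hz2⟩ := hz
          rcases Finset.mem_insert.1 (Finset.mem_coe.1 hz1) with rfl | hz1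
          · exact hsp.free1.not_mem hz2
          · rw [Finset.mem_singleton] at hz1; subst hz1
            exact hsp.free2.not_mem hz2
        · intro y hy
          rcases Finset.mem_insert.1 (Finset.mem_coe.1 hy) with rfl | hy
          · exact ⟨rootV d h, Set.mem_singleton _, hsp.reach1⟩
          · rw [Finset.mem_singleton] at hy; subst hy
            exact ⟨rootV d h, Set.mem_singleton _, hsp.reach2⟩
        · refine Or.inr ⟨hfin, hcard, {y₁, y₂}, rfl, ⟨y₁, Finset.mem_insert_self _ _⟩, ?_, ?_⟩
          · intro z hz
            have hl : z.1.length ≤ k + 1 := by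
              rcases Finset.mem_insert.1 hz with rfl | hz
              · have := hsp.len1; simpa [rootV] using this
              · rw [Finset.mem_singleton] at hz; subst hz
                have := hsp.len2; simpa [rootV] using this
            have hfp : Free U' z ∧ HasPar U' z := by
              rcases Finset.mem_insert.1 hz with rfl | hz
              · exact ⟨hsp.free1, hsp.par1⟩
              · rw [Finset.mem_singleton] at hz; subst hz
                exact ⟨hsp.free2, hsp.par2⟩
            refine ⟨hfp.1, hfp.2, ?_⟩
            rw [hc2]
            omega
          · intro z _
            exact le_trans (Finset.card_filter_le _ _) (le_of_eq hc2)
    · -- main case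
      subst hRS
      have hmemS : ∀ z ∈ S, (z : TreeV d h) ∈ (↑S : Set (TreeV d h)) :=
        fun z hz => Finset.mem_coe.2 hz
      have hScard : S.card ≤ 2 * k := by
        have h1 := card_le_two_mul hUfin (fun z hz => (hmain z hz).2.1) hfib
        omega
      have hSc1 : 1 ≤ S.card := Finset.card_pos.2 hSne
      have hinc : ∀ a ∈ S, ∀ b ∈ S, a.1 <+: b.1 → a = b := by
        intro a ha b hb hab
        by_contra hne
        have hlen : a.1.length < b.1.length :=
          lt_of_le_of_ne hab.length_le (fun he => hne (TreeV.ext (hab.eq_of_length he)))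
        obtain ⟨p, hpU, j, hbp⟩ := (hmain b hb).2.1
        have hpb : p.1 <+: b.1 := ⟨[j], hbp.symm⟩
        have hplen : b.1.length = p.1.length + 1 := by rw [hbp]; simp
        have hap : a.1 <+: p.1 := List.prefix_of_prefix_length_le hab hpb (by omega)
        exact (hmain a ha).1 p hap hpU
      have hpar' : ∀ z ∈ S, HasPar U' z := by
        intro z hz
        obtain ⟨p, hpU, j, hzp⟩ := (hmain z hz).2.1
        refine ⟨p, ?_, j, hzp⟩
        by_contra hpU'
        exact hmon p ⟨hpU, hpU'⟩ z (hmemS z hz)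
          (reach_parent (U ∩ U') p z j hzp (fun hc => hpU' hc.2))
      set Si := S.filter (fun x => ∃ t ∈ U', x.1 <+: t.1) with hSi
      set Sk := S.filter (fun x => ¬ ∃ t ∈ U', x.1 <+: t.1) with hSk
      have hSkS : ∀ z ∈ Sk, z ∈ S := fun z hz => (Finset.mem_filter.1 hz).1
      have hSiS : ∀ z ∈ Si, z ∈ S := fun z hz => (Finset.mem_filter.1 hz).1
      have hroomx : ∀ x ∈ S, x.1.length + k + 1 ≤ h := by
        intro x hx
        have hxl := (hmain x hx).2.2
        have e1 : (k + 1) * (S.card - 1) ≤ (k + 1) * (2 * k - 1) :=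
          Nat.mul_le_mul_left _ (by omega)
        have e2 : (k + 1) * (2 * k - 1) + (k + 2) ≤ 2 * (k + 1) ^ 2 := by
          rcases Nat.eq_zero_or_pos k with rfl | hk
          · simp
          · have : 2 * k - 1 + 1 = 2 * k := by omega
            nlinarith [this]
        omega
      have H : ∀ x : TreeV d h, ∃ y₁ y₂ : TreeV d h, x ∈ Si → SpawnP k U U' x y₁ y₂ := by
        intro x
        by_cases hx : x ∈ Si
        · obtain ⟨hxS, hxinv⟩ := Finset.mem_filter.1 hx
          obtain ⟨y₁, y₂, hsp⟩ := spawn hd hfin hcard htopdown (hmemS x hxS)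
            (hmain x hxS).1 hxinv (hroomx x hxS)
          exact ⟨y₁, y₂, fun _ => hsp⟩
        · exact ⟨x, x, fun hc => absurd hc hx⟩
      choose f₁ f₂ hP using H
      set S' := Sk ∪ Si.biUnion (fun x => {f₁ x, f₂ x}) with hS'
      have hmem' : ∀ z, z ∈ S' ↔ z ∈ Sk ∨ ∃ x ∈ Si, z = f₁ x ∨ z = f₂ x := by
        intro z
        simp [hS', Finset.mem_union, Finset.mem_biUnion, Finset.mem_insert,
          Finset.mem_singleton]
      have huniq : ∀ x ∈ Si, ∀ x' ∈ Si, ∀ l : List (Fin d),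
          x.1 <+: l → x'.1 <+: l → x = x' := by
        intro x hx x' hx' l h1 h2
        rcases prefix_comparable h1 h2 with hc | hc
        · exact hinc x (hSiS x hx) x' (hSiS x' hx') hc
        · exact (hinc x' (hSiS x' hx') x (hSiS x hx) hc).symm
      have hkept_new : ∀ z ∈ Sk, ∀ x ∈ Si, ¬ x.1 <+: z.1 := by
        intro z hz x hx hpre
        have hxz : x = z := hinc x (hSiS x hx) z (hSkS z hz) hpre
        subst hxz
        exact (Finset.mem_filter.1 hz).2 (Finset.mem_filter.1 hx).2
      have hSkmem : ∀ z ∈ S, z ∉ Si → z ∈ Sk := by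
        intro z hz hzi
        exact Finset.mem_filter.2 ⟨hz, fun hc => hzi (Finset.mem_filter.2 ⟨hz, hc⟩)⟩
      set φ : TreeV d h → TreeV d h := fun z => if z ∈ Si then f₁ z else z with hφ
      have hφmaps : ∀ z ∈ S, φ z ∈ S' := by
        intro z hz
        by_cases hzi : z ∈ Si
        · simp only [hφ, if_pos hzi]
          exact (hmem' _).2 (Or.inr ⟨z, hzi, Or.inl rfl⟩)
        · simp only [hφ, if_neg hzi]
          exact (hmem' _).2 (Or.inl (hSkmem z hz hzi))
      have hφinj : Set.InjOn φ ↑S := by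
        intro a ha b hb hab
        rw [Finset.mem_coe] at ha hb
        by_cases hai : a ∈ Si <;> by_cases hbi : b ∈ Si
        · simp only [hφ, if_pos hai, if_pos hbi] at hab
          exact huniq a hai b hbi (f₁ b).1 (hab ▸ (hP a hai).pre1) (hP b hbi).pre1
        · simp only [hφ, if_pos hai, if_neg hbi] at hab
          exact absurd (hab ▸ (hP a hai).pre1) (hkept_new b (hSkmem b hb hbi) a hai)
        · simp only [hφ, if_neg hai, if_pos hbi] at hab
          exact absurd (hab ▸ (hP b hbi).pre1) (hkept_new a (hSkmem a ha hai) b hbi)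
        · simpa only [hφ, if_neg hai, if_neg hbi] using hab
      have hcard_ge : S.card ≤ S'.card := Finset.card_le_card_of_injOn φ hφmaps hφinj
      have hcard_gt : ∀ x₀ ∈ Si, S.card + 1 ≤ S'.card := by
        intro x₀ hx₀
        have h2 : ∀ z ∈ S, φ z ∈ S'.erase (f₂ x₀) := by
          intro z hz
          refine Finset.mem_erase.2 ⟨?_, hφmaps z hz⟩
          by_cases hzi : z ∈ Si
          · simp only [hφ, if_pos hzi]
            intro hc
            have hzx : z = x₀ :=
              huniq z hzi x₀ hx₀ (f₂ x₀).1 (hc ▸ (hP z hzi).pre1) (hP x₀ hx₀).pre2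
            subst hzx
            exact (hP z hzi).ne hc
          · simp only [hφ, if_neg hzi]
            intro hc
            exact hkept_new z (hSkmem z hz hzi) x₀ hx₀ (hc ▸ (hP x₀ hx₀).pre2)
        have h3 := Finset.card_le_card_of_injOn φ h2 hφinj
        have h4 : f₂ x₀ ∈ S' := (hmem' _).2 (Or.inr ⟨x₀, hx₀, Or.inr rfl⟩)
        rw [Finset.card_erase_of_mem h4] at h3
        omega
      have hS'ne : S'.Nonempty := by
        obtain ⟨x₀, hx₀⟩ := hSne
        exact ⟨φ x₀, hφmaps x₀ hx₀⟩
      have hfree' : ∀ z ∈ S', Free U' z := by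
        intro z hz
        rcases (hmem' z).1 hz with hzk | ⟨x, hxSi, hzf⟩
        · intro y hy hyU'
          exact (Finset.mem_filter.1 hzk).2 ⟨y, hyU', hy⟩
        · rcases hzf with rfl | rfl
          · exact (hP x hxSi).free1
          · exact (hP x hxSi).free2
      have hpar'' : ∀ z ∈ S', HasPar U' z := by
        intro z hz
        rcases (hmem' z).1 hz with hzk | ⟨x, hxSi, hzf⟩
        · exact hpar' z (hSkS z hzk)
        · rcases hzf with rfl | rfl
          · exact (hP x hxSi).par1
          · exact (hP x hxSi).par2
      have hlen' : ∀ z ∈ S', z.1.length ≤ (k + 1) * (S'.card - 1) + 1 := by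
        intro z hz
        rcases (hmem' z).1 hz with hzk | ⟨x, hxSi, hzf⟩
        · have h1 := (hmain z (hSkS z hzk)).2.2
          have h2 : (k + 1) * (S.card - 1) ≤ (k + 1) * (S'.card - 1) :=
            Nat.mul_le_mul_left _ (by omega)
          omega
        · have hxl := (hmain x (hSiS x hxSi)).2.2
          have hlz : z.1.length ≤ x.1.length + k + 1 := by
            rcases hzf with rfl | rfl
            · exact (hP x hxSi).len1
            · exact (hP x hxSi).len2
          have hgt := hcard_gt x hxSi
          have h5 : S.card - 1 + 1 ≤ S'.card - 1 := by omega
          have h2 : (k + 1) * (S.card - 1) + (k + 1) ≤ (k + 1) * (S'.card - 1) := by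
            calc (k + 1) * (S.card - 1) + (k + 1) = (k + 1) * ((S.card - 1) + 1) := by ring
              _ ≤ (k + 1) * (S'.card - 1) := Nat.mul_le_mul_left _ h5
          omega
      have hnenil : ∀ z ∈ S, z.1 ≠ [] := by
        intro z hz
        obtain ⟨p, _, j, hzp⟩ := (hmain z hz).2.1
        rw [hzp]; simp
      have hfib' : ∀ w ∈ S', (S'.filter (fun z => z.1.dropLast = w.1.dropLast)).card ≤ 2 := by
        intro w hw
        rcases (hmem' w).1 hw with hwk | ⟨x, hxSi, hwf⟩
        · refine le_trans (Finset.card_le_card ?_) (hfib w (hSkS w hwk))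
          intro z hz
          obtain ⟨hzS', hzd⟩ := Finset.mem_filter.1 hz
          rcases (hmem' z).1 hzS' with hzk | ⟨x, hxSi, hzf⟩
          · exact Finset.mem_filter.2 ⟨hSkS z hzk, hzd⟩
          · exfalso
            have hzd1 : z.1.dropLast = (f₁ x).1.dropLast := by
              rcases hzf with rfl | rfl
              · rfl
              · exact ((hP x hxSi).dl).symm
            have hxw : x.1 <+: w.1 :=
              (hP x hxSi).sib w.1 (hnenil w (hSkS w hwk)) (by rw [← hzd, hzd1])
            exact hkept_new w hwk x hxSi hxw
        · have hwd : w.1.dropLast = (f₁ x).1.dropLast := by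
            rcases hwf with rfl | rfl
            · rfl
            · exact ((hP x hxSi).dl).symm
          refine le_trans (Finset.card_le_card (t := {f₁ x, f₂ x}) ?_)
            (le_trans (Finset.card_insert_le _ _) (by simp))
          intro z hz
          obtain ⟨hzS', hzd⟩ := Finset.mem_filter.1 hz
          have hzdx : z.1.dropLast = (f₁ x).1.dropLast := hzd.trans hwd
          rcases (hmem' z).1 hzS' with hzk | ⟨x', hx'Si, hzf⟩
          · exfalso
            exact hkept_new z hzk x hxSi ((hP x hxSi).sib z.1 (hnenil z (hSkS z hzk)) hzdx)
          · have hzlen : 0 < z.1.length := by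
              rcases hzf with rfl | rfl
              · exact lt_of_le_of_lt (Nat.zero_le _) (hP x' hx'Si).lt1
              · exact lt_of_le_of_lt (Nat.zero_le _) (hP x' hx'Si).lt2
            have hzne : z.1 ≠ [] := List.ne_nil_of_length_pos hzlen
            have hx'z : x'.1 <+: z.1 := by
              rcases hzf with rfl | rfl
              · exact (hP x' hx'Si).pre1
              · exact (hP x' hx'Si).pre2
            have hxz : x.1 <+: z.1 := (hP x hxSi).sib z.1 hzne hzdx
            have hxx : x = x' := huniq x hxSi x' hx'Si z.1 hxz hx'z
            subst hxx
            rcases hzf with rfl | rfl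
            · exact Finset.mem_insert_self _ _
            · exact Finset.mem_insert.2 (Or.inr (Finset.mem_singleton_self _))
      -- apply induction hypothesis
      refine ih ↑S' (Finset.finite_toSet S') ?_ ?_ ?_
        (Or.inr ⟨hfin, hcard, S', rfl, hS'ne, fun z hz => ⟨hfree' z hz, hpar'' z hz, hlen' z hz⟩, hfib'⟩)
      · rw [Set.ncard_coe_finset]
        have := card_le_two_mul hfin hpar'' hfib'
        omega
      · apply Set.eq_empty_iff_forall_notMem.2
        intro z hz
        obtain ⟨hz1, hz2⟩ := hz
        exact (hfree' z (Finset.mem_coe.1 hz1)).not_mem hz2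
      · intro y hy
        rcases (hmem' y).1 (Finset.mem_coe.1 hy) with hyk | ⟨x, hxSi, hyf⟩
        · exact ⟨y, hmemS y (hSkS y hyk), Relation.ReflTransGen.refl⟩
        · rcases hyf with rfl | rfl
          · exact ⟨x, hmemS x (hSiS x hxSi), (hP x hxSi).reach1⟩
          · exact ⟨x, hmemS x (hSiS x hxSi), (hP x hxSi).reach2⟩

end RBT

/-- **Robbers beat top-down cops on trees:** on the full undirected tree of
branching degree `d ≥ 3` and sufficient height, `i ≥ 1` robbers (who can jump
to each other) win the multiple-robbers game against `⌊i/2⌋` cops playing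
top-down: for some initial robber placement the top-down cops have no monotone
winning strategy. -/
theorem robbers_beat_topdown_cops (d i : ℕ) (hd : 3 ≤ d) (hi : 1 ≤ i) :
    ∃ h0 : ℕ, ∀ h : ℕ, h0 ≤ h →
      ∃ R0 : Set (TreeV d h), R0.Finite ∧ R0.ncard ≤ i ∧
        ¬ TopDownCopsWin d h (i / 2) i ∅ R0 := by
  refine ⟨2 * (i / 2 + 1) ^ 2, fun h hh => ⟨{RBT.rootV d h}, Set.finite_singleton _, ?_, ?_⟩⟩
  · rw [Set.ncard_singleton]; exact hi
  · intro W
    have hki : 2 * (i / 2) ≤ i := by omega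
    exact RBT.no_win hd hi hki hh ∅ {RBT.rootV d h} W (Or.inl ⟨rfl, rfl⟩)
end

section
/- In the cops-and-robber game characterizing DAG-width played against an isolating prudent team of robbers, the following holds for the combined strategy ⊗_r f built from a monotone active winning strategy f for k cops: in every reachable cop position with memory histories ρ₁ ⊏ … ⊏ ρ_s satisfying invariants (Cons), (Lin), (Omit), (Ext), for every i ≤ s−1 one has Reach_{G−U^i}(R_i) ⊆ O^i, where U^i = ⋃_{j≤i} U_j, O^i = ⋃_{j≤i} O_j, and U_j = W_j \ O^{j−1}. -/
/-- **Lemma `lemma_le`:** in the combined strategy `⊗_r f` for the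
multiple-robbers game, consider the memory data of the histories
`ρ₁ ⊏ … ⊏ ρ_s`: last cop placements `Wᵢ`, associated robber sets `Rᵢ` and
omitted sets `Oᵢ` (for `i ≤ s − 1`, here indexed by `Fin m`), satisfying the
invariant (Omit): `Rᵢ ⊆ Oᵢ = Reach_{G−Wᵢ}(Oᵢ)`.  With `Uⱼ = Wⱼ \ O^{j−1}`,
`U^i = ⋃_{j≤i} Uⱼ` and `O^i = ⋃_{j≤i} Oⱼ`, one has, for every `i ≤ s − 1`,
`Reach_{G−U^i}(Rᵢ) ⊆ O^i`. -/
theorem reach_subset_omitted {V : Type*} (E : V → V → Prop) (m : ℕ)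
    (W R O : Fin m → Set V)
    (hRsubO : ∀ i, R i ⊆ O i)
    (hOmit : ∀ i, O i = {v | ∃ x ∈ O i, v ∈ reachAvoid E (W i) x}) :
    ∀ i : Fin m,
      {v | ∃ x ∈ R i,
          v ∈ reachAvoid E
            (⋃ (j : Fin m) (_ : j ≤ i), (W j \ ⋃ (l : Fin m) (_ : l < j), O l)) x}
        ⊆ ⋃ (j : Fin m) (_ : j ≤ i), O j := by

  intro i v hv
  obtain ⟨x, hx, hreach⟩ := hv
  simp only [Set.mem_iUnion]
  induction hreach with
  | refl => exact ⟨i, le_refl i, hRsubO i hx⟩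
  | tail _ hstep ih =>
    rename_i b c _
    obtain ⟨l, hl, hb⟩ := ih
    obtain ⟨hE, hc⟩ := hstep
    by_cases hcW : c ∈ W l
    · -- c ∈ W l but c ∉ U^i, so c ∈ O l' for some l' < l
      have : c ∉ W l \ ⋃ (l' : Fin m) (_ : l' < l), O l' := by
        intro h
        exact hc (Set.mem_iUnion.2 ⟨l, Set.mem_iUnion.2 ⟨hl, h⟩⟩)
      have : c ∈ ⋃ (l' : Fin m) (_ : l' < l), O l' := by
        by_contra h; exact this ⟨hcW, h⟩
      obtain ⟨l', hl', hcl'⟩ := by simpa using this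
      exact ⟨l', le_of_lt (lt_of_lt_of_le hl' hl), hcl'⟩
    · -- c ∉ W l: c reachable from b ∈ O l avoiding W l
      refine ⟨l, hl, ?_⟩
      rw [hOmit l]
      exact ⟨b, hb, Relation.ReflTransGen.single ⟨hE, hcW⟩⟩
end

section
/- If π̄ is an infinite play of the cops-and-robber game on the powerset graph Ḡ consistent with the translated strategy, and each finite prefix π̄ᵢ is associated (via the translation) with a finitely-branching tree ζ(π̄ᵢ) of f-consistent histories of the game on G extending one another, then by König's Lemma there is an infinite play on G consistent with f — contradicting that f is winning. Hence the translated strategy on Ḡ admits no infinite consistent play. -/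
/-- One round of the single-robber cops-and-robber game on `G` played according
to the positional cop strategy `f`. -/
def copStep {V : Type*} (E : V → V → Prop) (f : Set V → V → Set V)
    (p q : Set V × V) : Prop :=
  q.1 = f p.1 p.2 ∧ q.2 ∈ reachAvoid E (p.1 ∩ q.1) p.2 ∧ q.2 ∉ q.1

/-- `f` is winning (guarantees capture): there is no infinite play consistent
with `f`. -/
def StratWinning {V : Type*} (E : V → V → Prop) (f : Set V → V → Set V) : Prop :=
  ¬ ∃ p : ℕ → Set V × V, (p 0).1 = ∅ ∧ ∀ n, copStep E f (p n) (p (n + 1))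


set_option linter.unusedVariables false


def resAux {α : Type*} {n m : ℕ} (_h : n ≤ m) (b : Fin (m + 1) → α) : Fin (n + 1) → α :=
  fun i => b ⟨i.1, by omega⟩

lemma resAux_self {α : Type*} {n : ℕ} (b : Fin (n + 1) → α) :
    resAux (le_refl n) b = b := funext fun i => congrArg b (Fin.ext rfl)

lemma resAux_trans {α : Type*} {n m k : ℕ} (h1 : n ≤ m) (h2 : m ≤ k)
    (b : Fin (k + 1) → α) :
    resAux h1 (resAux h2 b) = resAux (h1.trans h2) b :=
  funext fun i => congrArg b (Fin.ext rfl)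

lemma resAux_castSucc {α : Type*} {n : ℕ} (b : Fin (n + 2) → α) :
    resAux (Nat.le_succ n) b = fun i : Fin (n + 1) => b i.castSucc :=
  funext fun i => congrArg b (Fin.ext rfl)

lemma exists_freq {α : Type*} {T : Set α} (hT : T.Finite) (g : ℕ → α)
    (hg : ∀ m, g m ∈ T) : ∃ b ∈ T, ∀ m, ∃ m', m ≤ m' ∧ g m' = b := by
  haveI := hT.to_subtype
  obtain ⟨y, hy⟩ := Finite.exists_infinite_fiber (fun m => (⟨g m, hg m⟩ : T))
  refine ⟨y.1, y.2, fun m => ?_⟩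
  have hinf : {m' | (⟨g m', hg m'⟩ : T) = y}.Infinite := Set.infinite_coe_iff.mp hy
  obtain ⟨m', hm', hge⟩ := hinf.exists_gt m
  exact ⟨m', le_of_lt hge, congrArg Subtype.val hm'⟩


/-- **König's Lemma step in the translation to the powerset graph.**
Suppose `f` is a winning cop strategy on `G` and `π̄` is an infinite play of the
cops-and-robber game on the powerset graph `Ḡ` consistent with the translated
strategy, whose finite prefixes are associated with a coherent family of
finitely-branching trees of `f`-consistent histories on `G`: for each `n`,
`S n` is the nonempty finite set of branches of length `n` (at most `r` per
level), each branch is an `f`-consistent history starting with an empty cop set,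
and each branch of `S (n+1)` extends a branch of `S n`.  Then, by König's Lemma,
there is an infinite `f`-consistent play — a contradiction.  Hence the
translated strategy on `Ḡ` admits no such infinite consistent play. -/
theorem koenig_no_infinite_play {V : Type*} (E : V → V → Prop)
    (f : Set V → V → Set V) (hwin : StratWinning E f) (r : ℕ)
    (pibar : ℕ → Set V × Set V)
    (S : ∀ n : ℕ, Set (Fin (n + 1) → Set V × V))
    (hne : ∀ n, (S n).Nonempty)
    (hfin : ∀ n, (S n).Finite)
    (hbranch : ∀ n, (S n).ncard ≤ r)
    (hcons : ∀ n, ∀ b ∈ S n, (b 0).1 = ∅ ∧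
        ∀ i : Fin n, copStep E f (b i.castSucc) (b i.succ))
    (hcoh : ∀ n, ∀ b ∈ S (n + 1), (fun i : Fin (n + 1) => b i.castSucc) ∈ S n)
    (hlevels : ∀ n, ∀ b ∈ S n, (b (Fin.last n)).2 ∈ (pibar n).2) :
    False := by
  classical
  -- restriction of a branch stays in the tree
  have res_mem : ∀ m n (h : n ≤ m) (b : Fin (m + 1) → Set V × V),
      b ∈ S m → resAux h b ∈ S n := by
    intro m
    induction m with
    | zero =>
      intro n h b hb
      have hn : n = 0 := Nat.le_zero.mp h
      subst hn
      rw [resAux_self]; exact hb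
    | succ m ih =>
      intro n h b hb
      rcases Nat.lt_or_ge n (m + 1) with hlt | hge
      · have h' : n ≤ m := Nat.lt_succ_iff.mp hlt
        have : resAux h b = resAux h' (resAux (Nat.le_succ m) b) := by
          rw [resAux_trans]
        rw [this]
        refine ih n h' _ ?_
        rw [resAux_castSucc]
        exact hcoh m b hb
      · have hn : n = m + 1 := le_antisymm h hge
        subst hn
        rw [resAux_self]; exact hb
  -- the set of "extendable" branches
  set Ext : ∀ n, Set (Fin (n + 1) → Set V × V) :=
    fun n => {b | b ∈ S n ∧ ∀ m (h : n ≤ m), ∃ c ∈ S m, resAux h c = b} with hExt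
  -- each Ext n is nonempty
  have hExtNe : ∀ n, (Ext n).Nonempty := by
    intro n
    set g : ℕ → Fin (n + 1) → Set V × V :=
      fun m => resAux (Nat.le_add_right n m) (hne (n + m)).choose with hg
    have hgmem : ∀ m, g m ∈ S n := fun m =>
      res_mem _ _ _ _ (hne (n + m)).choose_spec
    obtain ⟨b, hbS, hb⟩ := exists_freq (hfin n) g hgmem
    refine ⟨b, hbS, fun m h => ?_⟩
    obtain ⟨m', hm', hgm'⟩ := hb m
    refine ⟨resAux (show m ≤ n + m' by omega) (hne (n + m')).choose,
      res_mem _ _ _ _ (hne (n + m')).choose_spec, ?_⟩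
    rw [resAux_trans]
    exact hgm'
  -- every extendable branch has an extendable extension
  have hstep : ∀ n (b : Fin (n + 1) → Set V × V), b ∈ Ext n →
      ∃ b' ∈ Ext (n + 1), resAux (Nat.le_succ n) b' = b := by
    intro n b hb
    obtain ⟨hbS, hbext⟩ := hb
    have hc : ∀ m : ℕ, ∃ c ∈ S (n + 1 + m), resAux (show n ≤ n + 1 + m by omega) c = b :=
      fun m => hbext (n + 1 + m) (by omega)
    set g : ℕ → Fin (n + 2) → Set V × V :=
      fun m => resAux (Nat.le_add_right (n + 1) m) (hc m).choose with hg
    have hgmem : ∀ m, g m ∈ S (n + 1) := fun m =>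
      res_mem _ _ _ _ (hc m).choose_spec.1
    obtain ⟨b', hb'S, hb'⟩ := exists_freq (hfin (n + 1)) g hgmem
    have hres : resAux (Nat.le_succ n) b' = b := by
      obtain ⟨m', hm', hgm'⟩ := hb' 0
      rw [← hgm', hg]
      simp only
      rw [resAux_trans]
      exact (hc m').choose_spec.2
    refine ⟨b', ⟨hb'S, fun m h => ?_⟩, hres⟩
    obtain ⟨m', hm', hgm'⟩ := hb' m
    refine ⟨resAux (show m ≤ n + 1 + m' by omega) (hc m').choose,
      res_mem _ _ _ _ (hc m').choose_spec.1, ?_⟩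
    rw [resAux_trans]
    exact hgm'
  -- build the infinite branch by recursion
  let F : ∀ n, {b : Fin (n + 1) → Set V × V // b ∈ Ext n} :=
    fun n => Nat.rec
      ⟨(hExtNe 0).choose, (hExtNe 0).choose_spec⟩
      (fun k bk => ⟨(hstep k bk.1 bk.2).choose, (hstep k bk.1 bk.2).choose_spec.1⟩) n
  have hFcoh : ∀ n, resAux (Nat.le_succ n) (F (n + 1)).1 = (F n).1 :=
    fun n => (hstep n (F n).1 (F n).2).choose_spec.2
  -- the infinite play
  refine hwin ⟨fun n => (F n).1 (Fin.last n), ?_, ?_⟩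
  · have h0 := (hcons 0 (F 0).1 (F 0).2.1).1
    have he : (Fin.last 0) = (0 : Fin 1) := Fin.ext rfl
    show (((F 0).1 (Fin.last 0))).1 = ∅
    rw [he]; exact h0
  · intro n
    have h := (hcons (n + 1) (F (n + 1)).1 (F (n + 1)).2.1).2 (Fin.last n)
    have h1 : (F (n + 1)).1 (Fin.last n).castSucc = (F n).1 (Fin.last n) := by
      rw [← hFcoh n]
      exact congrArg (F (n + 1)).1 (Fin.ext rfl)
    have h2 : (Fin.last n).succ = Fin.last (n + 1) := Fin.succ_last n
    rw [h1, h2] at h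
    exact h
end
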